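/- arXiv:2603.18929 — 8 statements merged into one kernel-verified Lean document; each statement's English description precedes it below -/
import Mathlib

section
/- Let C and D be centrally symmetric convex bodies in ℝ^d, let α > 0, and let C₊ := C + α·D (Minkowski sum). Then for all p, x ∈ D°, one has ‖p − x‖_{(C₊)°} ≤ ‖p − x‖_{C°} + 2α. In particular, if ‖p − x‖_{C°} ≤ α then ‖p − x‖_{(C₊)°} ≤ 3α. -/
open Set MeasureTheory Metric
open scoped Pointwise RealInnerProductSpace ENNReal

noncomputable section

abbrev Euc (d : ℕ) := EuclideanSpace ℝ (Fin d)

/-- A convex body: a compact convex set with nonempty interior. -/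
def IsConvexBody {d : ℕ} (K : Set (Euc d)) : Prop :=
  IsCompact K ∧ Convex ℝ K ∧ (interior K).Nonempty

/-- The polar of a set. -/
def polarSet {d : ℕ} (S : Set (Euc d)) : Set (Euc d) :=
  {y | ∀ x ∈ S, ⟪x, y⟫ ≤ 1}

/-- The Hilbert distance with respect to the body `K`. -/
def hilbertDist {d : ℕ} (K : Set (Euc d)) (x y : Euc d) : ℝ :=
  -(1 / 2) * Real.log ((1 - gauge ((fun k => k - x) '' K) (y - x)) *
    (1 - gauge ((fun k => k - y) '' K) (x - y)))

/-- The Hilbert ball of radius `r` centered at `x`. -/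
def hilbertBall {d : ℕ} (K : Set (Euc d)) (x : Euc d) (r : ℝ) : Set (Euc d) :=
  {y ∈ interior K | hilbertDist K x y ≤ r}

/-- The Hilbert covering number of `U` at scale `α` in the geometry induced by `K`. -/
def hilbertCov {d : ℕ} (K U : Set (Euc d)) (α : ℝ) : ℕ :=
  sInf {m : ℕ | ∃ x : Fin m → Euc d, (∀ i, x i ∈ interior K) ∧
    U ⊆ ⋃ i, hilbertBall K (x i) α}

/-- The translative covering number of `U` by translates of `α • D`. -/
def transCov {d : ℕ} (D U : Set (Euc d)) (α : ℝ) : ℕ :=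
  sInf {m : ℕ | ∃ x : Fin m → Euc d, U ⊆ ⋃ i, x i +ᵥ α • D}

/-- The Hilbert `α`-expansion of `G` in `K`. -/
def hilbertExpand {d : ℕ} (K G : Set (Euc d)) (α : ℝ) : Set (Euc d) :=
  {x ∈ interior K | sInf (hilbertDist K x '' G) ≤ α}

/-- The Lebesgue volume of the Euclidean unit ball in `ℝ^d`. -/
def ωd (d : ℕ) : ℝ := (volume (ball (0 : Euc d) 1)).toReal

/-- The Hilbert Finsler unit ball at `y` in the geometry induced by `K`. -/
def finslerBall {d : ℕ} (K : Set (Euc d)) (y : Euc d) : Set (Euc d) :=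
  {v | gauge ((fun k => k - y) '' K) v + gauge ((fun k => k - y) '' K) (-v) ≤ 2}

/-- The Hilbert Holmes–Thompson volume of `U` in the geometry induced by `K`. -/
def volH {d : ℕ} (K U : Set (Euc d)) : ℝ :=
  (1 / ωd d) * ∫ y in U, (volume (polarSet (finslerBall K y))).toReal

/-- The recentered Macbeath region `A(x) := (K ∩ (2x − K)) − x`. -/
def macbeathA {d : ℕ} (K : Set (Euc d)) (x : Euc d) : Set (Euc d) :=
  (fun k => k - x) '' (K ∩ ((fun k => (2 : ℝ) • x - k) '' K))

/-- Minkowski polarity-expansion stability. -/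
theorem mink_polar_expansion_stability {d : ℕ} (C D : Set (Euc d))
    (hC : IsConvexBody C) (hD : IsConvexBody D)
    (hCs : C = -C) (hDs : D = -D) (α : ℝ) (hα : 0 < α)
    (p x : Euc d) (hp : p ∈ polarSet D) (hx : x ∈ polarSet D) :
    gauge (polarSet (C + α • D)) (p - x) ≤ gauge (polarSet C) (p - x) + 2 * α ∧
    (gauge (polarSet C) (p - x) ≤ α →
      gauge (polarSet (C + α • D)) (p - x) ≤ 3 * α) := by
  set u := p - x with hu
  -- key bound: for any d' in D, ⟪d', u⟫ ≤ 2
  have hDbound : ∀ d' ∈ D, ⟪d', u⟫ ≤ 2 := by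
    intro d' hd'
    have h1 : ⟪d', p⟫ ≤ 1 := hp d' hd'
    have hnd : -d' ∈ D := Set.mem_neg.1 (hDs ▸ hd')
    have h2 : ⟪-d', x⟫ ≤ 1 := hx _ hnd
    have h2' : -(1:ℝ) ≤ ⟪d', x⟫ := by
      rw [inner_neg_left] at h2; linarith
    have : ⟪d', u⟫ = ⟪d', p⟫ - ⟪d', x⟫ := by rw [hu, inner_sub_right]
    linarith
  -- the defining set for gauge (polarSet C) u is nonempty
  have key : ∀ s : ℝ, gauge (polarSet C) u < s →
      gauge (polarSet (C + α • D)) u ≤ s + 2 * α := by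
    intro s hs
    have hbdd : BddAbove ((fun c => ⟪c, u⟫) '' C) :=
      (hC.1.image (Continuous.inner continuous_id continuous_const)).bddAbove
    obtain ⟨M, hM⟩ := hbdd
    have hMb : ∀ c ∈ C, ⟪c, u⟫ ≤ M := fun c hc => hM ⟨c, hc, rfl⟩
    set r₀ : ℝ := max 1 M with hr₀
    have hr₀pos : (0:ℝ) < r₀ := lt_of_lt_of_le one_pos (le_max_left _ _)
    have hmem₀ : u ∈ r₀ • polarSet C := by
      rw [mem_smul_set_iff_inv_smul_mem₀ hr₀pos.ne']
      intro c hc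
      rw [real_inner_smul_right]
      have : ⟪c, u⟫ ≤ r₀ := le_trans (hMb c hc) (le_max_right _ _)
      calc r₀⁻¹ * ⟪c, u⟫ ≤ r₀⁻¹ * r₀ := by
            exact mul_le_mul_of_nonneg_left this (inv_nonneg.2 hr₀pos.le)
        _ = 1 := inv_mul_cancel₀ hr₀pos.ne'
    have hne : ({ r ∈ Set.Ioi (0:ℝ) | u ∈ r • polarSet C }).Nonempty :=
      ⟨r₀, hr₀pos, hmem₀⟩
    rw [gauge_def] at hs
    obtain ⟨r, ⟨hrpos', hrmem⟩, hrs⟩ := exists_lt_of_csInf_lt hne hs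
    have hrpos : (0:ℝ) < r := hrpos'
    -- now show u ∈ (r + 2α) • polarSet (C + α • D)
    have hr2 : (0:ℝ) < r + 2 * α := by positivity
    have hmem : u ∈ (r + 2 * α) • polarSet (C + α • D) := by
      rw [mem_smul_set_iff_inv_smul_mem₀ hr2.ne']
      intro z hz
      obtain ⟨c, hc, w, hw, rfl⟩ := Set.mem_add.1 hz
      obtain ⟨d', hd', rfl⟩ := hw
      have hcu : ⟪c, u⟫ ≤ r := by
        rw [mem_smul_set_iff_inv_smul_mem₀ hrpos.ne'] at hrmem
        have := hrmem c hc
        rw [real_inner_smul_right] at this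
        calc ⟪c, u⟫ = r * (r⁻¹ * ⟪c, u⟫) := by
              rw [← mul_assoc, mul_inv_cancel₀ hrpos.ne', one_mul]
          _ ≤ r * 1 := mul_le_mul_of_nonneg_left this hrpos.le
          _ = r := mul_one r
      have hdu : ⟪d', u⟫ ≤ 2 := hDbound d' hd'
      rw [real_inner_smul_right, inner_add_left, real_inner_smul_left]
      have htot : ⟪c, u⟫ + α * ⟪d', u⟫ ≤ r + 2 * α := by nlinarith
      calc (r + 2*α)⁻¹ * (⟪c, u⟫ + α * ⟪d', u⟫)
          ≤ (r + 2*α)⁻¹ * (r + 2*α) :=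
            mul_le_mul_of_nonneg_left htot (inv_nonneg.2 hr2.le)
        _ = 1 := inv_mul_cancel₀ hr2.ne'
    calc gauge (polarSet (C + α • D)) u ≤ r + 2 * α := gauge_le_of_mem hr2.le hmem
      _ ≤ s + 2 * α := by linarith
  have main : gauge (polarSet (C + α • D)) u ≤ gauge (polarSet C) u + 2 * α := by
    refine le_of_forall_pos_le_add fun ε hε => ?_
    have := key (gauge (polarSet C) u + ε) (by linarith)
    linarith
  exact ⟨main, fun h => by linarith⟩
end
end

section
/- There exists an absolute constant c ≥ 1 such that for every dimension d ≥ 2, all centrally symmetric convex bodies C, D ⊆ ℝ^d, every α > 0, and every set U ⊆ D°, with C₊ := C + α·D one has N_{(C₊)°}(U, α) ≤ c^{d} · N_{C°}(U, α), where N_A(U,α) denotes the translative covering number of U by translates of α·A. -/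
open Set MeasureTheory Metric
open scoped Pointwise RealInnerProductSpace ENNReal

noncomputable section

section Aux

variable {d : ℕ}

lemma zero_mem_polarSet (S : Set (Euc d)) : (0 : Euc d) ∈ polarSet S := by
  intro x _; simp [inner_zero_right]

lemma neg_mem_polarSet {S : Set (Euc d)} (hS : S = -S) {y : Euc d}
    (hy : y ∈ polarSet S) : -y ∈ polarSet S := by
  intro x hx
  have hx' : -x ∈ S := by rw [hS]; exact Set.neg_mem_neg.2 hx
  have h := hy _ hx'
  rwa [inner_neg_right, ← inner_neg_left]

lemma convex_polarSet (S : Set (Euc d)) : Convex ℝ (polarSet S) := by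
  intro y hy z hz a b ha hb hab x hx
  have h1 := hy x hx
  have h2 := hz x hx
  have h3 : ⟪x, a • y + b • z⟫ = a * ⟪x, y⟫ + b * ⟪x, z⟫ := by
    rw [inner_add_right, real_inner_smul_right, real_inner_smul_right]
  show ⟪x, a • y + b • z⟫ ≤ 1
  rw [h3]
  nlinarith

lemma isClosed_polarSet (S : Set (Euc d)) : IsClosed (polarSet S) := by
  have h : polarSet S = ⋂ x ∈ S, {y : Euc d | ⟪x, y⟫ ≤ 1} := by
    ext y; simp [polarSet]
  rw [h]
  exact isClosed_biInter fun x _ =>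
    isClosed_le (Continuous.inner continuous_const continuous_id) continuous_const

lemma polarSet_subset_closedBall {S : Set (Euc d)} {r : ℝ} (hr : 0 < r)
    (h : ball (0 : Euc d) r ⊆ S) : polarSet S ⊆ closedBall 0 (2 / r) := by
  intro y hy
  rw [mem_closedBall, dist_zero_right]
  rcases eq_or_ne y 0 with rfl | hy0
  · simp; positivity
  · have hny : 0 < ‖y‖ := norm_pos_iff.2 hy0
    set x := (r / (2 * ‖y‖)) • y with hxdef
    have hxball : x ∈ ball (0 : Euc d) r := by
      rw [mem_ball, dist_zero_right, hxdef, norm_smul, Real.norm_eq_abs,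
        abs_of_pos (by positivity)]
      rw [div_mul_eq_mul_div]
      rw [div_lt_iff₀ (by positivity)]
      nlinarith
    have h1 := hy x (h hxball)
    rw [hxdef, real_inner_smul_left, real_inner_self_eq_norm_sq] at h1
    rw [le_div_iff₀ hr]
    have hexp : r / (2 * ‖y‖) * ‖y‖ ^ 2 = ‖y‖ * r / 2 := by
      field_simp
    rw [hexp] at h1
    linarith

lemma closedBall_subset_polarSet {S : Set (Euc d)} {R : ℝ} (hR : 0 < R)
    (h : S ⊆ closedBall (0 : Euc d) R) : closedBall (0 : Euc d) (1 / R) ⊆ polarSet S := by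
  intro y hy x hx
  have h1 : ‖x‖ ≤ R := by simpa [dist_zero_right] using h hx
  have h2 : ‖y‖ ≤ 1 / R := by simpa [dist_zero_right] using hy
  calc ⟪x, y⟫ ≤ ‖x‖ * ‖y‖ := real_inner_le_norm x y
    _ ≤ R * (1 / R) := by
        apply mul_le_mul h1 h2 (norm_nonneg _) hR.le
    _ = 1 := by field_simp

lemma symm_body_ball {C : Set (Euc d)} (hC : IsConvexBody C) (hs : C = -C) :
    ∃ r : ℝ, 0 < r ∧ ball (0 : Euc d) r ⊆ C := by
  obtain ⟨_, hconv, x, hx⟩ := hC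
  have hnegC : -C = C := by
    have h2 := congrArg Neg.neg hs
    rwa [neg_neg] at h2
  have hx' : -x ∈ interior C := by
    have hopen : IsOpen (-interior C) := isOpen_interior.neg
    have hsub : -interior C ⊆ C := by
      intro z hz
      rw [Set.mem_neg] at hz
      rw [← hnegC, Set.mem_neg]
      exact interior_subset hz
    exact interior_maximal hsub hopen (Set.neg_mem_neg.2 hx)
  have h0 : (0 : Euc d) ∈ interior C := by
    have := hconv.interior hx hx' (by norm_num : (0:ℝ) ≤ 1/2)
      (by norm_num : (0:ℝ) ≤ 1/2) (by norm_num)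
    simpa [smul_neg] using this
  obtain ⟨r, hr, hball⟩ := Metric.mem_nhds_iff.1 (isOpen_interior.mem_nhds h0)
  exact ⟨r, hr, hball.trans interior_subset⟩

lemma body_subset_closedBall {C : Set (Euc d)} (hC : IsConvexBody C) :
    ∃ R : ℝ, 0 < R ∧ C ⊆ closedBall (0 : Euc d) R := by
  obtain ⟨R, hR⟩ := hC.1.isBounded.subset_closedBall 0
  exact ⟨max R 1, by positivity, hR.trans (closedBall_subset_closedBall (le_max_left _ _))⟩

lemma mem_vadd_iff_sub {v x : Euc d} {s : Set (Euc d)} : x ∈ v +ᵥ s ↔ x - v ∈ s := by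
  rw [Set.mem_vadd_set_iff_neg_vadd_mem]
  simp [vadd_eq_add, sub_eq_neg_add]

lemma closedBall_subset_smul {c s : ℝ} (hc : 0 < c) {B : Set (Euc d)}
    (hB : closedBall (0 : Euc d) s ⊆ B) :
    closedBall (0 : Euc d) (c * s) ⊆ c • B := by
  intro x hx
  rw [Set.mem_smul_set_iff_inv_smul_mem₀ hc.ne']
  apply hB
  rw [mem_closedBall, dist_zero_right] at hx ⊢
  rw [norm_smul, norm_inv, Real.norm_eq_abs, abs_of_pos hc]
  rw [inv_mul_le_iff₀ hc] at *
  linarith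



lemma packing_cover {d : ℕ} {Q : Set (Euc d)} (hQc : IsCompact Q)
    (hconv : Convex ℝ Q) (hsym : ∀ z ∈ Q, -z ∈ Q) {r : ℝ} (hr : 0 < r)
    (hball : ball (0 : Euc d) r ⊆ Q) {S : Set (Euc d)}
    (hS : ∀ s ∈ S, ∀ t ∈ S, s - t ∈ (4 : ℝ) • Q) :
    ∃ y : Fin (9 ^ d) → Euc d, S ⊆ ⋃ j, y j +ᵥ Q := by
  classical
  rcases S.eq_empty_or_nonempty with rfl | hSne
  · exact ⟨fun _ => 0, by simp⟩
  have h0Q : (0 : Euc d) ∈ Q := hball (mem_ball_self hr)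
  have halfQ : (2⁻¹ : ℝ) • Q + (2⁻¹ : ℝ) • Q = Q := by
    rw [← hconv.add_smul (by norm_num) (by norm_num)]
    norm_num
  have hhalfsym : ∀ z ∈ (2⁻¹ : ℝ) • Q, -z ∈ (2⁻¹ : ℝ) • Q := by
    rintro z ⟨w, hw, rfl⟩
    exact ⟨-w, hsym w hw, by simp⟩
  -- the cardinality bound for separated sets
  have cardBound : ∀ P : Finset (Euc d), ↑P ⊆ S →
      (∀ p ∈ P, ∀ q ∈ P, p ≠ q → p - q ∉ Q) → P.card ≤ 9 ^ d := by
    intro P hPS hPsep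
    rcases P.eq_empty_or_nonempty with rfl | ⟨p₀, hp₀⟩
    · positivity
    set f : Euc d → Set (Euc d) := fun p => p +ᵥ (2⁻¹ : ℝ) • Q with hfdef
    have hmeas : ∀ p : Euc d, MeasurableSet (f p) := fun p =>
      (IsCompact.vadd p (hQc.smul (2⁻¹ : ℝ))).isClosed.measurableSet
    have hdisj : (↑P : Set (Euc d)).PairwiseDisjoint f := by
      intro p hp q hq hpq
      rw [Function.onFun, Set.disjoint_left]
      intro x hxp hxq
      have ha : x - p ∈ (2⁻¹ : ℝ) • Q := mem_vadd_iff_sub.1 hxp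
      have hb : x - q ∈ (2⁻¹ : ℝ) • Q := mem_vadd_iff_sub.1 hxq
      have hna : -(x - p) ∈ (2⁻¹ : ℝ) • Q := hhalfsym _ ha
      have hpq2 : p - q ∈ Q := by
        have hid : p - q = -(x - p) + (x - q) := by abel
        rw [hid, ← halfQ]
        exact Set.add_mem_add hna hb
      exact hPsep p hp q hq hpq hpq2
    have hsubs : ∀ p ∈ P, f p ⊆ p₀ +ᵥ ((9 : ℝ) / 2) • Q := by
      intro p hp x hx
      have hxp : x - p ∈ (2⁻¹ : ℝ) • Q := mem_vadd_iff_sub.1 hx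
      have hpp0 : p - p₀ ∈ (4 : ℝ) • Q := hS p (hPS hp) p₀ (hPS hp₀)
      rw [mem_vadd_iff_sub]
      have hsum : (2⁻¹ : ℝ) • Q + (4 : ℝ) • Q = ((9 : ℝ) / 2) • Q := by
        rw [← hconv.add_smul (by norm_num) (by norm_num)]
        norm_num
      have hid : x - p₀ = (x - p) + (p - p₀) := by abel
      rw [hid, ← hsum]
      exact Set.add_mem_add hxp hpp0
    have key : ∑ p ∈ P, volume (f p) ≤ volume (p₀ +ᵥ ((9 : ℝ) / 2) • Q) := by
      rw [← measure_biUnion_finset hdisj (fun p _ => hmeas p)]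
      exact measure_mono (Set.iUnion₂_subset hsubs)
    have hfp : ∀ p : Euc d, volume (f p) = ENNReal.ofReal ((2⁻¹ : ℝ) ^ d) * volume Q := by
      intro p
      rw [hfdef]
      rw [measure_vadd volume p _]
      rw [Measure.addHaar_smul_of_nonneg volume (by norm_num : (0:ℝ) ≤ 2⁻¹),
        finrank_euclideanSpace_fin]
    rw [measure_vadd volume p₀ _,
      Measure.addHaar_smul_of_nonneg volume (by norm_num : (0:ℝ) ≤ (9:ℝ)/2),
      finrank_euclideanSpace_fin] at key
    have hsum : ∑ p ∈ P, volume (f p) = P.card * (ENNReal.ofReal ((2⁻¹ : ℝ) ^ d) * volume Q) := by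
      rw [Finset.sum_congr rfl (fun p _ => hfp p), Finset.sum_const, nsmul_eq_mul]
    rw [hsum] at key
    have hsplit : ENNReal.ofReal (((9 : ℝ) / 2) ^ d) =
        ((9 : ℕ) ^ d : ℝ≥0∞) * ENNReal.ofReal ((2⁻¹ : ℝ) ^ d) := by
      have h1 : ((9 : ℝ) / 2) ^ d = (9 : ℝ) ^ d * (2⁻¹ : ℝ) ^ d := by
        rw [← mul_pow]; norm_num
      rw [h1, ENNReal.ofReal_mul (by positivity)]
      congr 1
      rw [ENNReal.ofReal_pow (by norm_num)]
      norm_cast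
    rw [hsplit, mul_assoc] at key
    have hvQpos : volume Q ≠ 0 := by
      have hmono : volume (ball (0 : Euc d) r) ≤ volume Q := measure_mono hball
      have hbp : 0 < volume (ball (0 : Euc d) r) := measure_ball_pos _ _ hr
      exact fun h => absurd (hmono.trans_eq h) (not_le.2 hbp)
    have hvQtop : volume Q ≠ ⊤ := hQc.measure_lt_top.ne
    have hfac : ENNReal.ofReal ((2⁻¹ : ℝ) ^ d) * volume Q ≠ 0 := by
      apply mul_ne_zero _ hvQpos
      rw [Ne, ENNReal.ofReal_eq_zero, not_le]
      positivity
    have hfactop : ENNReal.ofReal ((2⁻¹ : ℝ) ^ d) * volume Q ≠ ⊤ :=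
      ENNReal.mul_ne_top ENNReal.ofReal_ne_top hvQtop
    have hcard : (P.card : ℝ≥0∞) ≤ ((9 : ℕ) ^ d : ℝ≥0∞) :=
      (ENNReal.mul_le_mul_iff_left hfac hfactop).1 key
    exact_mod_cast hcard
  -- maximal separated set
  set T : Set ℕ := {n | ∃ P : Finset (Euc d), ↑P ⊆ S ∧
    (∀ p ∈ P, ∀ q ∈ P, p ≠ q → p - q ∉ Q) ∧ P.card = n} with hTdef
  have hT0 : 0 ∈ T := ⟨∅, by simp⟩
  have hTb : BddAbove T := ⟨9 ^ d, by rintro n ⟨P, h1, h2, rfl⟩; exact cardBound P h1 h2⟩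
  obtain ⟨P, hPS, hPsep, hPcard⟩ := Nat.sSup_mem ⟨0, hT0⟩ hTb
  have hmax : ∀ s ∈ S, ∃ p ∈ P, s - p ∈ Q := by
    by_contra hcon
    push_neg at hcon
    obtain ⟨s, hsS, hs⟩ := hcon
    have hsP : s ∉ P := fun hsP => hs s hsP (by simpa using h0Q)
    have hmem : P.card + 1 ∈ T := by
      refine ⟨insert s P, ?_, ?_, by rw [Finset.card_insert_of_notMem hsP]⟩
      · intro z hz
        rcases Finset.mem_insert.1 hz with rfl | hz'
        · exact hsS
        · exact hPS hz'
      · intro p hp q hq hne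
        rcases Finset.mem_insert.1 hp with hp1 | hp' <;>
          rcases Finset.mem_insert.1 hq with hq1 | hq'
        · exact absurd (hp1.trans hq1.symm) hne
        · rw [hp1]; exact hs q hq'
        · intro hmem
          apply hs p hp'
          have hid : s - p = -(p - q) := by rw [hq1]; abel
          rw [hid]
          exact hsym _ hmem
        · exact hPsep p hp' q hq' hne
    have hle := le_csSup hTb hmem
    rw [hPcard] at hle
    omega
  obtain ⟨s₀, hs₀⟩ := hSne
  obtain ⟨p₁, hp₁, -⟩ := hmax s₀ hs₀
  have hcard : P.card ≤ 9 ^ d := cardBound P hPS hPsep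
  refine ⟨fun j => if h : (j : ℕ) < P.card then ((P.equivFin.symm ⟨j, h⟩ : ↥P) : Euc d) else p₁, ?_⟩
  intro s hsS
  obtain ⟨p, hp, hspQ⟩ := hmax s hsS
  obtain ⟨k, hk⟩ := P.equivFin.symm.surjective ⟨p, hp⟩
  refine Set.mem_iUnion.2 ⟨⟨(k : ℕ), lt_of_lt_of_le k.2 hcard⟩, ?_⟩
  have heq : (if h : ((⟨(k : ℕ), lt_of_lt_of_le k.2 hcard⟩ : Fin (9 ^ d)) : ℕ) < P.card then
      ((P.equivFin.symm ⟨(⟨(k : ℕ), lt_of_lt_of_le k.2 hcard⟩ : Fin (9 ^ d)), ‹_›⟩ : ↥P) : Euc d)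
      else p₁) = p := by
    rw [dif_pos k.2]
    have : (⟨(k : ℕ), k.2⟩ : Fin P.card) = k := rfl
    rw [this, hk]
  rw [mem_vadd_iff_sub]
  simp only [heq]
  exact hspQ

/-- Covering stability under polarity and Minkowski expansion. -/
theorem mink_polar_expansion_cover :
    ∃ c : ℝ, 1 ≤ c ∧ ∀ d : ℕ, 2 ≤ d →
      ∀ C D : Set (Euc d), IsConvexBody C → IsConvexBody D →
        C = -C → D = -D →
        ∀ α : ℝ, 0 < α → ∀ U : Set (Euc d), U ⊆ polarSet D →
          (transCov (polarSet (C + α • D)) U α : ℝ) ≤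
            c ^ d * (transCov (polarSet C) U α : ℝ) := by
  classical
  refine ⟨9, by norm_num, ?_⟩
  intro d _ C D hC hD hCs hDs α hα U hU
  rcases U.eq_empty_or_nonempty with rfl | hUne
  · have h0 : transCov (polarSet (C + α • D)) (∅ : Set (Euc d)) α = 0 := by
      unfold transCov
      have hm : 0 ∈ {m : ℕ | ∃ x : Fin m → Euc d,
          (∅ : Set (Euc d)) ⊆ ⋃ i, x i +ᵥ α • polarSet (C + α • D)} :=
        ⟨Fin.elim0, by simp⟩
      exact Nat.eq_zero_of_le_zero (Nat.sInf_le hm)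
    rw [h0]
    push_cast
    positivity
  obtain ⟨rC, hrC, hCball⟩ := symm_body_ball hC hCs
  obtain ⟨RC, hRC, hCsub⟩ := body_subset_closedBall hC
  obtain ⟨rD, hrD, hDball⟩ := symm_body_ball hD hDs
  obtain ⟨RD, hRD, hDsub⟩ := body_subset_closedBall hD
  have hPCball : closedBall (0 : Euc d) (1 / RC) ⊆ polarSet C :=
    closedBall_subset_polarSet hRC hCsub
  have hPCbd : polarSet C ⊆ closedBall 0 (2 / rC) := polarSet_subset_closedBall hrC hCball
  have hPDball : closedBall (0 : Euc d) (1 / RD) ⊆ polarSet D :=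
    closedBall_subset_polarSet hRD hDsub
  have hPDbd : polarSet D ⊆ closedBall 0 (2 / rD) := polarSet_subset_closedBall hrD hDball
  have hPCconv := convex_polarSet C
  have hPDconv := convex_polarSet D
  have hPCsym : ∀ z ∈ polarSet C, -z ∈ polarSet C := fun z hz => neg_mem_polarSet hCs hz
  have hPDsym : ∀ z ∈ polarSet D, -z ∈ polarSet D := fun z hz => neg_mem_polarSet hDs hz
  have hPCcpt : IsCompact (polarSet C) :=
    IsCompact.of_isClosed_subset (isCompact_closedBall _ _) (isClosed_polarSet C) hPCbd
  have hPDcpt : IsCompact (polarSet D) :=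
    IsCompact.of_isClosed_subset (isCompact_closedBall _ _) (isClosed_polarSet D) hPDbd
  -- existence of some finite cover of U by translates of α • polarSet C
  set ε := α * (1 / RC) with hεdef
  have hε : 0 < ε := by positivity
  have hballsub : ∀ p : Euc d, ball p ε ⊆ p +ᵥ α • polarSet C := by
    intro p z hz
    rw [mem_vadd_iff_sub]
    apply closedBall_subset_smul hα hPCball
    rw [mem_closedBall, dist_zero_right]
    rw [mem_ball, dist_eq_norm] at hz
    rw [hεdef] at hz
    exact hz.le
  obtain ⟨b', hb'sub, hb'fin, hb'cov⟩ := hPDcpt.elim_finite_subcover_image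
    (b := polarSet D) (c := fun p => ball p ε) (fun p _ => isOpen_ball)
    (fun p hp => Set.mem_biUnion hp (mem_ball_self hε))
  have hNne : {m : ℕ | ∃ xx : Fin m → Euc d, U ⊆ ⋃ i, xx i +ᵥ α • polarSet C}.Nonempty := by
    refine ⟨hb'fin.toFinset.card,
      fun i => ((hb'fin.toFinset.equivFin.symm i : ↥hb'fin.toFinset) : Euc d), ?_⟩
    intro u hu
    obtain ⟨p, hp, hup⟩ := Set.mem_iUnion₂.1 (hb'cov (hU hu))
    have hpfin : p ∈ hb'fin.toFinset := hb'fin.mem_toFinset.2 hp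
    obtain ⟨k, hk⟩ := hb'fin.toFinset.equivFin.symm.surjective ⟨p, hpfin⟩
    refine Set.mem_iUnion.2 ⟨k, ?_⟩
    show u ∈ ((hb'fin.toFinset.equivFin.symm k : ↥hb'fin.toFinset) : Euc d) +ᵥ α • polarSet C
    rw [hk]
    exact hballsub p hup
  have hNmem : ∃ xx : Fin (transCov (polarSet C) U α) → Euc d,
      U ⊆ ⋃ i, xx i +ᵥ α • polarSet C := by
    have h := Nat.sInf_mem hNne
    exact h
  obtain ⟨x, hx⟩ := hNmem
  -- the small body Q
  set Q : Set (Euc d) := ((α / 2) • polarSet C) ∩ ((2⁻¹ : ℝ) • polarSet D) with hQdef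
  have hhalf : (0:ℝ) < α / 2 := half_pos hα
  have hQconv : Convex ℝ Q := (hPCconv.smul _).inter (hPDconv.smul _)
  have hQsym : ∀ z ∈ Q, -z ∈ Q := by
    intro z hz
    obtain ⟨hz1, hz2⟩ := hz
    rw [Set.mem_smul_set_iff_inv_smul_mem₀ hhalf.ne'] at hz1
    rw [Set.mem_smul_set_iff_inv_smul_mem₀ (by norm_num : (2⁻¹:ℝ) ≠ 0)] at hz2
    constructor
    · rw [Set.mem_smul_set_iff_inv_smul_mem₀ hhalf.ne', smul_neg]
      exact hPCsym _ hz1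
    · rw [Set.mem_smul_set_iff_inv_smul_mem₀ (by norm_num : (2⁻¹:ℝ) ≠ 0), smul_neg]
      exact hPDsym _ hz2
  set ρ := min ((α / 2) * (1 / RC)) (2⁻¹ * (1 / RD)) with hρdef
  have hρ : 0 < ρ := lt_min (by positivity) (by positivity)
  have hQball : ball (0 : Euc d) ρ ⊆ Q := by
    intro z hz
    have hz' : z ∈ closedBall (0 : Euc d) ρ := ball_subset_closedBall hz
    constructor
    · exact closedBall_subset_smul hhalf hPCball
        (closedBall_subset_closedBall (min_le_left _ _) hz')
    · exact closedBall_subset_smul (by norm_num) hPDball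
        (closedBall_subset_closedBall (min_le_right _ _) hz')
  have hQcpt : IsCompact Q :=
    (hPCcpt.smul (α / 2)).inter_right (hPDcpt.smul (2⁻¹ : ℝ)).isClosed
  have hQsub : Q ⊆ α • polarSet (C + α • D) := by
    rintro z ⟨hz1, hz2⟩
    rw [Set.mem_smul_set_iff_inv_smul_mem₀ hα.ne']
    intro w hw
    obtain ⟨xc, hxc, yda, hyda, rfl⟩ := Set.mem_add.1 hw
    obtain ⟨yd, hyd, rfl⟩ := hyda
    rw [Set.mem_smul_set_iff_inv_smul_mem₀ hhalf.ne'] at hz1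
    rw [Set.mem_smul_set_iff_inv_smul_mem₀ (by norm_num : (2⁻¹:ℝ) ≠ 0)] at hz2
    have h1 : ⟪xc, (α / 2)⁻¹ • z⟫ ≤ 1 := hz1 xc hxc
    have h2 : ⟪yd, ((2⁻¹:ℝ))⁻¹ • z⟫ ≤ 1 := hz2 yd hyd
    rw [real_inner_smul_right] at h1 h2
    rw [show ((2⁻¹:ℝ))⁻¹ = 2 by norm_num] at h2
    rw [inv_div, div_mul_eq_mul_div, div_le_one hα] at h1
    show ⟪xc + α • yd, α⁻¹ • z⟫ ≤ 1
    rw [inner_add_left, real_inner_smul_right, real_inner_smul_left, real_inner_smul_right]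
    have hb : ⟪yd, z⟫ ≤ 1 / 2 := by linarith
    have ha : α⁻¹ * ⟪xc, z⟫ ≤ 1 / 2 := by
      rw [inv_mul_le_iff₀ hα]
      linarith
    have hcomm : α * (α⁻¹ * ⟪yd, z⟫) = ⟪yd, z⟫ := by field_simp
    rw [hcomm]
    linarith
  -- the pieces
  have hSdiff : ∀ i : Fin (transCov (polarSet C) U α),
      ∀ s ∈ U ∩ (x i +ᵥ α • polarSet C), ∀ t ∈ U ∩ (x i +ᵥ α • polarSet C),
        s - t ∈ (4 : ℝ) • Q := by
    intro i s hs t ht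
    obtain ⟨hsU, hsx⟩ := hs
    obtain ⟨htU, htx⟩ := ht
    rw [mem_vadd_iff_sub, Set.mem_smul_set_iff_inv_smul_mem₀ hα.ne'] at hsx htx
    rw [Set.mem_smul_set_iff_inv_smul_mem₀ (by norm_num : (4:ℝ) ≠ 0)]
    have hinv2 : ((2⁻¹:ℝ))⁻¹ = 2 := by norm_num
    have hinvhalf : (α / 2 : ℝ)⁻¹ = 2 * α⁻¹ := by
      rw [inv_div]
      ring
    constructor
    · rw [Set.mem_smul_set_iff_inv_smul_mem₀ hhalf.ne']
      have hcombo := hPCconv hsx (hPCsym _ htx) (by norm_num : (0:ℝ) ≤ 2⁻¹)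
        (by norm_num : (0:ℝ) ≤ 2⁻¹) (by norm_num)
      have hidlin : (α / 2 : ℝ)⁻¹ • ((4:ℝ)⁻¹ • (s - t)) =
          (2⁻¹ : ℝ) • (α⁻¹ • (s - x i)) + (2⁻¹ : ℝ) • -(α⁻¹ • (t - x i)) := by
        rw [hinvhalf]
        module
      rw [hidlin]
      exact hcombo
    · rw [Set.mem_smul_set_iff_inv_smul_mem₀ (by norm_num : (2⁻¹:ℝ) ≠ 0)]
      have hcombo := hPDconv (hU hsU) (hPDsym _ (hU htU)) (by norm_num : (0:ℝ) ≤ 2⁻¹)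
        (by norm_num : (0:ℝ) ≤ 2⁻¹) (by norm_num)
      have hidlin : ((2⁻¹:ℝ))⁻¹ • ((4:ℝ)⁻¹ • (s - t)) =
          (2⁻¹ : ℝ) • s + (2⁻¹ : ℝ) • -t := by
        rw [hinv2]
        module
      rw [hidlin]
      exact hcombo
  have hpack : ∀ i : Fin (transCov (polarSet C) U α),
      ∃ y : Fin (9 ^ d) → Euc d, U ∩ (x i +ᵥ α • polarSet C) ⊆ ⋃ j, y j +ᵥ Q :=
    fun i => packing_cover hQcpt hQconv hQsym hρ hQball (hSdiff i)
  choose y hy using hpack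
  have hmem : transCov (polarSet C) U α * 9 ^ d ∈ {m : ℕ | ∃ g : Fin m → Euc d,
      U ⊆ ⋃ k, g k +ᵥ α • polarSet (C + α • D)} := by
    refine ⟨fun k => y (finProdFinEquiv.symm k).1 (finProdFinEquiv.symm k).2, ?_⟩
    intro u hu
    obtain ⟨i, hi⟩ := Set.mem_iUnion.1 (hx hu)
    have huSi : u ∈ U ∩ (x i +ᵥ α • polarSet C) := ⟨hu, hi⟩
    obtain ⟨j, hj⟩ := Set.mem_iUnion.1 (hy i huSi)
    refine Set.mem_iUnion.2 ⟨finProdFinEquiv (i, j), ?_⟩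
    simp only [Equiv.symm_apply_apply]
    rw [mem_vadd_iff_sub] at hj ⊢
    exact hQsub hj
  have hle : transCov (polarSet (C + α • D)) U α ≤ transCov (polarSet C) U α * 9 ^ d := by
    unfold transCov
    exact Nat.sInf_le hmem
  calc (transCov (polarSet (C + α • D)) U α : ℝ)
      ≤ ((transCov (polarSet C) U α * 9 ^ d : ℕ) : ℝ) := by exact_mod_cast hle
    _ = (9:ℝ) ^ d * (transCov (polarSet C) U α : ℝ) := by push_cast; ring
end Aux
end
end

section
/- Let G and K be convex bodies in ℝ^d with 0 ∈ int(G) and G ⊆ int(K), let α > 0, and let G₊ := {x ∈ int(K) : inf_{g∈G} d_H^K(x,g) ≤ α} be the Hilbert α-expansion of G in K. Then for all p, x ∈ K°, one has d_H^{(G₊)°}(p, x) ≤ d_H^{G°}(p, x) + 2α. In particular, if d_H^{G°}(p,x) ≤ α then d_H^{(G₊)°}(p,x) ≤ 3α. (Here G₊ ⊆ int(K) with closure a convex body, so K° ⊆ int((G₊)°) and the left-hand side is well defined.) -/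
open Set MeasureTheory Metric
open scoped Pointwise RealInnerProductSpace ENNReal

noncomputable section

section AuxStmt7

variable {d : ℕ}


lemma inner_lt_one_of_interior {K : Set (Euc d)} {y x : Euc d}
    (hy : y ∈ interior K) (hx : x ∈ polarSet K) : ⟪y, x⟫ < 1 := by
  rcases Metric.mem_nhds_iff.1 (mem_interior_iff_mem_nhds.1 hy) with ⟨ε, hε, hball⟩
  by_cases hx0 : x = 0
  · simp [hx0]
  · have hnx : 0 < ‖x‖ := norm_pos_iff.2 hx0
    have hmem : y + (ε / (2 * ‖x‖)) • x ∈ K := by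
      apply hball
      simp only [Metric.mem_ball, dist_eq_norm]
      rw [show y + (ε / (2 * ‖x‖)) • x - y = (ε / (2 * ‖x‖)) • x by abel]
      rw [norm_smul]
      rw [Real.norm_eq_abs, abs_of_pos (by positivity)]
      rw [div_mul_eq_mul_div, mul_comm (2:ℝ) ‖x‖, ← div_div, mul_div_assoc]
      rw [div_self (ne_of_gt hnx), mul_one]
      linarith
    have h1 := hx _ hmem
    rw [inner_add_left, real_inner_smul_left, real_inner_self_eq_norm_sq] at h1
    have : 0 < ε / (2 * ‖x‖) * ‖x‖ ^ 2 := by positivity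
    linarith

lemma gauge_sub_lt_one {K : Set (Euc d)} {y : Euc d} (g : Euc d)
    (hy : y ∈ interior K) : gauge ((fun k => k - g) '' K) (y - g) < 1 := by
  by_cases hyg : y = g
  · simp [hyg, gauge_zero]
  · rcases Metric.mem_nhds_iff.1 (mem_interior_iff_mem_nhds.1 hy) with ⟨ε, hε, hball⟩
    have hn : 0 < ‖y - g‖ := by
      rw [norm_pos_iff]; exact sub_ne_zero.2 hyg
    set t : ℝ := ε / (2 * ‖y - g‖) with ht
    have htpos : 0 < t := by positivity
    have hmem : y + t • (y - g) ∈ K := by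
      apply hball
      simp only [Metric.mem_ball, dist_eq_norm]
      rw [show y + t • (y - g) - y = t • (y - g) by abel]
      rw [norm_smul, Real.norm_eq_abs, abs_of_pos htpos, ht]
      rw [div_mul_eq_mul_div, mul_comm (2:ℝ) ‖y - g‖, ← div_div, mul_div_assoc]
      rw [div_self (ne_of_gt hn), mul_one]
      linarith
    have hmem2 : y - g ∈ (1 + t)⁻¹ • ((fun k => k - g) '' K) := by
      refine ⟨(y + t • (y - g)) - g, ⟨_, hmem, rfl⟩, ?_⟩
      rw [show y + t • (y - g) - g = (1 + t) • (y - g) by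
        rw [add_smul, one_smul]; abel]
      show (1 + t)⁻¹ • (1 + t) • (y - g) = y - g
      rw [smul_smul, inv_mul_cancel₀ (by positivity), one_smul]
    have : gauge ((fun k => k - g) '' K) (y - g) ≤ (1 + t)⁻¹ := by
      apply csInf_le ⟨0, fun r hr => le_of_lt hr.1⟩
      exact ⟨by positivity, hmem2⟩
    have h2 : (1 + t)⁻¹ < 1 := by
      rw [inv_lt_one_iff₀]; right; linarith
    linarith

lemma funk_step {K : Set (Euc d)} {x g y : Euc d}
    (hx : ∀ k ∈ K, ⟪k, x⟫ ≤ 1) (hgK : g ∈ K) (hy : y ∈ K) :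
    (1 - gauge ((fun k => k - g) '' K) (y - g)) * (1 - ⟪g, x⟫) ≤ 1 - ⟪y, x⟫ := by
  set A := gauge ((fun k => k - g) '' K) (y - g) with hA
  set S : Set ℝ := {r : ℝ | 0 < r ∧ y - g ∈ r • ((fun k => k - g) '' K)} with hS
  have hSne : S.Nonempty := by
    refine ⟨1, one_pos, ?_⟩
    rw [one_smul]
    exact ⟨y, hy, rfl⟩
  have hgx : ⟪g, x⟫ ≤ 1 := hx g hgK
  -- every r in S gives the bound
  have hstep : ∀ r ∈ S, ⟪y, x⟫ - ⟪g, x⟫ ≤ r * (1 - ⟪g, x⟫) := by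
    rintro r ⟨hr, w, ⟨k', hk', rfl⟩, hw⟩
    have : ⟪y - g, x⟫ = r * ⟪k' - g, x⟫ := by
      rw [← hw, real_inner_smul_left]
    rw [inner_sub_left] at this
    have hk'x : ⟪k' - g, x⟫ ≤ 1 - ⟪g, x⟫ := by
      rw [inner_sub_left]; linarith [hx k' hk']
    nlinarith [hr.le]
  -- conclude with the infimum
  have hmain : ⟪y, x⟫ - ⟪g, x⟫ ≤ A * (1 - ⟪g, x⟫) := by
    refine le_of_forall_pos_le_add fun ε hε => ?_
    obtain ⟨r, hrS, hrlt⟩ := Real.lt_sInf_add_pos hSne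
      (show (0:ℝ) < ε / (1 + |1 - ⟪g, x⟫|) by positivity)
    have h1 := hstep r hrS
    have hrA : A ≤ r := csInf_le ⟨0, fun s hs => le_of_lt hs.1⟩ hrS
    have habs : 1 - ⟪g, x⟫ ≤ |1 - ⟪g, x⟫| := le_abs_self _
    have habs0 : (0:ℝ) ≤ |1 - ⟪g, x⟫| := abs_nonneg _
    have hden : (0:ℝ) < 1 + |1 - ⟪g, x⟫| := by positivity
    have : r * (1 - ⟪g, x⟫) ≤ A * (1 - ⟪g, x⟫) + (r - A) * |1 - ⟪g, x⟫| := by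
      nlinarith [sub_nonneg.2 hrA]
    have hr2 : (r - A) * |1 - ⟪g, x⟫| ≤ ε := by
      have hAS : A = sInf S := rfl
      have h3 : r - A < ε / (1 + |1 - ⟪g, x⟫|) := by
        rw [hAS]; linarith [hrlt]
      have h4 : (r - A) * |1 - ⟪g, x⟫| ≤ (ε / (1 + |1 - ⟪g, x⟫|)) * (1 + |1 - ⟪g, x⟫|) := by
        nlinarith [sub_nonneg.2 hrA]
      rw [div_mul_cancel₀] at h4
      · exact h4
      · positivity
    linarith
  nlinarith [hmain]

lemma hilbert_core {K : Set (Euc d)} {p x y g : Euc d}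
    (hy : y ∈ interior K) (hg : g ∈ interior K)
    (hp : p ∈ polarSet K) (hx : x ∈ polarSet K) {β : ℝ}
    (hd : hilbertDist K y g ≤ β) :
    Real.exp (-(2 * β)) * ((1 - ⟪g, x⟫) * (1 - ⟪y, p⟫)) ≤
      (1 - ⟪y, x⟫) * (1 - ⟪g, p⟫) := by
  set A := gauge ((fun k => k - g) '' K) (y - g) with hA
  set B := gauge ((fun k => k - y) '' K) (g - y) with hB
  have hA0 : 0 ≤ A := gauge_nonneg _
  have hB0 : 0 ≤ B := gauge_nonneg _
  have hA1 : A < 1 := gauge_sub_lt_one g hy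
  have hB1 : B < 1 := gauge_sub_lt_one y hg
  have hprod : 0 < (1 - B) * (1 - A) := by nlinarith
  have hexp : Real.exp (-(2 * β)) ≤ (1 - B) * (1 - A) := by
    have hdd : hilbertDist K y g = -(1/2) * Real.log ((1 - B) * (1 - A)) := rfl
    rw [hdd] at hd
    have hlog : -(2 * β) ≤ Real.log ((1 - B) * (1 - A)) := by linarith
    calc Real.exp (-(2 * β)) ≤ Real.exp (Real.log ((1 - B) * (1 - A))) :=
          Real.exp_le_exp.2 hlog
      _ = (1 - B) * (1 - A) := Real.exp_log hprod
  have h1 : (1 - A) * (1 - ⟪g, x⟫) ≤ 1 - ⟪y, x⟫ :=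
    funk_step hx (interior_subset hg) (interior_subset hy)
  have h2 : (1 - B) * (1 - ⟪y, p⟫) ≤ 1 - ⟪g, p⟫ :=
    funk_step hp (interior_subset hy) (interior_subset hg)
  have hgx : 0 ≤ 1 - ⟪g, x⟫ := by linarith [inner_lt_one_of_interior hg hx]
  have hyp : 0 ≤ 1 - ⟪y, p⟫ := by linarith [inner_lt_one_of_interior hy hp]
  have hAx : 0 ≤ (1 - A) * (1 - ⟪g, x⟫) := mul_nonneg (by linarith) hgx
  have hBp : 0 ≤ (1 - B) * (1 - ⟪y, p⟫) := mul_nonneg (by linarith) hyp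
  calc Real.exp (-(2 * β)) * ((1 - ⟪g, x⟫) * (1 - ⟪y, p⟫))
      ≤ ((1 - B) * (1 - A)) * ((1 - ⟪g, x⟫) * (1 - ⟪y, p⟫)) := by
        apply mul_le_mul_of_nonneg_right hexp (mul_nonneg hgx hyp)
    _ = ((1 - A) * (1 - ⟪g, x⟫)) * ((1 - B) * (1 - ⟪y, p⟫)) := by ring
    _ ≤ (1 - ⟪y, x⟫) * (1 - ⟪g, p⟫) := mul_le_mul h1 h2 hBp (by linarith)

lemma hilbertDist_nonneg {K : Set (Euc d)} {y g : Euc d}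
    (hy : y ∈ interior K) (hg : g ∈ interior K) : 0 ≤ hilbertDist K y g := by
  set A := gauge ((fun k => k - g) '' K) (y - g) with hA
  set B := gauge ((fun k => k - y) '' K) (g - y) with hB
  have hA0 : 0 ≤ A := gauge_nonneg _
  have hB0 : 0 ≤ B := gauge_nonneg _
  have hA1 : A < 1 := gauge_sub_lt_one g hy
  have hB1 : B < 1 := gauge_sub_lt_one y hg
  have hdd : hilbertDist K y g = -(1/2) * Real.log ((1 - B) * (1 - A)) := rfl
  rw [hdd]
  have : Real.log ((1 - B) * (1 - A)) ≤ 0 :=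
    Real.log_nonpos (by nlinarith) (by nlinarith)
  linarith

lemma hilbertDist_self {K : Set (Euc d)} (g : Euc d) : hilbertDist K g g = 0 := by
  have : hilbertDist K g g = -(1/2) * Real.log ((1 - gauge ((fun k => k - g) '' K) (g - g)) *
      (1 - gauge ((fun k => k - g) '' K) (g - g))) := rfl
  rw [this, sub_self, gauge_zero]
  norm_num


lemma gauge_sub_le_one {s : Set (Euc d)} {p x : Euc d} (hx : x ∈ s) :
    gauge ((fun k => k - p) '' s) (x - p) ≤ 1 := by
  apply csInf_le ⟨0, fun r hr => le_of_lt hr.1⟩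
  exact ⟨one_pos, by rw [one_smul]; exact ⟨x, hx, rfl⟩⟩

lemma key_gauge_bound {G K : Set (Euc d)} (hGne : G.Nonempty) (hGK : G ⊆ interior K)
    {α β : ℝ} (hβ : α < β) (hβpos : 0 < β) {p x : Euc d}
    (hp : p ∈ polarSet K) (hx : x ∈ polarSet K) :
    gauge ((fun k => k - p) '' polarSet (hilbertExpand K G α)) (x - p) ≤
      1 - Real.exp (-(2 * β)) *
        (1 - gauge ((fun k => k - p) '' polarSet G) (x - p)) := by
  set a := gauge ((fun k => k - p) '' polarSet G) (x - p) with ha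
  set e := Real.exp (-(2 * β)) with he
  have ha0 : 0 ≤ a := gauge_nonneg _
  have he0 : 0 < e := Real.exp_pos _
  have he1 : e < 1 := by
    rw [he, show (1:ℝ) = Real.exp 0 by simp]
    apply Real.exp_lt_exp.2
    linarith
  set c := 1 - e * (1 - a) with hc
  have hcpos : 0 < c := by nlinarith
  -- the inner bound at points of G
  have hP2 : ∀ g ∈ G, ⟪g, x⟫ - ⟪g, p⟫ ≤ a * (1 - ⟪g, p⟫) := by
    intro g hg
    have hgp : ⟪g, p⟫ < 1 := inner_lt_one_of_interior (hGK hg) hp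
    have hSa : a = sInf {r : ℝ | 0 < r ∧ x - p ∈ r • ((fun k => k - p) '' polarSet G)} := rfl
    have hSne : {r : ℝ | 0 < r ∧ x - p ∈ r • ((fun k => k - p) '' polarSet G)}.Nonempty := by
      refine ⟨1, one_pos, ?_⟩
      rw [one_smul]
      refine ⟨x, ?_, rfl⟩
      intro g' hg'
      exact hx g' (interior_subset (hGK hg'))
    have hdiv : (⟪g, x⟫ - ⟪g, p⟫) / (1 - ⟪g, p⟫) ≤ a := by
      rw [hSa]
      apply le_csInf hSne
      rintro r ⟨hr, w, ⟨z, hzP, rfl⟩, hw⟩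
      have hw' : r • (z - p) = x - p := hw
      have hinner : ⟪g, x⟫ - ⟪g, p⟫ = r * (⟪g, z⟫ - ⟪g, p⟫) := by
        have : ⟪g, x - p⟫ = ⟪g, r • (z - p)⟫ := by rw [hw']
        rw [inner_sub_right, real_inner_smul_right, inner_sub_right] at this
        linarith
      have hz1 : ⟪g, z⟫ ≤ 1 := hzP g hg
      rw [div_le_iff₀ (by linarith)]
      rw [hinner]
      have : ⟪g, z⟫ - ⟪g, p⟫ ≤ 1 - ⟪g, p⟫ := by linarith
      nlinarith
    rw [div_le_iff₀ (by linarith)] at hdiv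
    linarith [hdiv]
  -- the point witnessing the gauge bound
  set z₀ := p + c⁻¹ • (x - p) with hz₀
  have hz₀mem : z₀ ∈ polarSet (hilbertExpand K G α) := by
    rintro w ⟨hw1, hw2⟩
    have hwp : ⟪w, p⟫ < 1 := inner_lt_one_of_interior hw1 hp
    have hwx : ⟪w, x⟫ < 1 := inner_lt_one_of_interior hw1 hx
    -- extract a witness g with small Hilbert distance
    obtain ⟨v, ⟨g, hg, rfl⟩, hv⟩ :=
      exists_lt_of_csInf_lt (hGne.image _) (lt_of_le_of_lt hw2 hβ)
    have hcore := hilbert_core hw1 (hGK hg) hp hx (le_of_lt hv)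
    rw [← he] at hcore
    have hgp : ⟪g, p⟫ < 1 := inner_lt_one_of_interior (hGK hg) hp
    have hP2g := hP2 g hg
    have hfac : (1 - a) * (1 - ⟪g, p⟫) ≤ 1 - ⟪g, x⟫ := by nlinarith
    have hwp0 : 0 ≤ 1 - ⟪w, p⟫ := by linarith
    have step1 : e * ((1 - a) * (1 - ⟪g, p⟫) * (1 - ⟪w, p⟫)) ≤
        e * ((1 - ⟪g, x⟫) * (1 - ⟪w, p⟫)) := by
      apply mul_le_mul_of_nonneg_left _ (le_of_lt he0)
      exact mul_le_mul_of_nonneg_right hfac hwp0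
    have step2 : e * ((1 - a) * (1 - ⟪g, p⟫) * (1 - ⟪w, p⟫)) ≤
        (1 - ⟪w, x⟫) * (1 - ⟪g, p⟫) := le_trans step1 hcore
    have hkey : e * (1 - a) * (1 - ⟪w, p⟫) ≤ 1 - ⟪w, x⟫ := by
      have hgp0 : 0 < 1 - ⟪g, p⟫ := by linarith
      have := (mul_le_mul_iff_of_pos_right hgp0).1 (by
        calc e * (1 - a) * (1 - ⟪w, p⟫) * (1 - ⟪g, p⟫)
            = e * ((1 - a) * (1 - ⟪g, p⟫) * (1 - ⟪w, p⟫)) := by ring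
          _ ≤ (1 - ⟪w, x⟫) * (1 - ⟪g, p⟫) := step2)
      exact this
    have hlin : ⟪w, x⟫ - ⟪w, p⟫ ≤ c * (1 - ⟪w, p⟫) := by
      have hc' : c * (1 - ⟪w, p⟫) = (1 - ⟪w, p⟫) - e * (1 - a) * (1 - ⟪w, p⟫) := by
        rw [hc]; ring
      linarith
    show ⟪w, z₀⟫ ≤ 1
    rw [hz₀, inner_add_right, real_inner_smul_right, inner_sub_right]
    have h2 := mul_le_mul_of_nonneg_left hlin (inv_nonneg.2 hcpos.le)
    rw [inv_mul_cancel_left₀ (ne_of_gt hcpos)] at h2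
    linarith
  -- conclude the gauge bound
  have hmem : x - p ∈ c • ((fun k => k - p) '' polarSet (hilbertExpand K G α)) := by
    refine ⟨z₀ - p, ⟨z₀, hz₀mem, rfl⟩, ?_⟩
    show c • (z₀ - p) = x - p
    rw [hz₀, add_sub_cancel_left, smul_inv_smul₀ (ne_of_gt hcpos)]
  exact csInf_le ⟨0, fun r hr => le_of_lt hr.1⟩ ⟨hcpos, hmem⟩

lemma gauge_antitone_pair {s t : Set (Euc d)} (hst : s ⊆ t) {p x : Euc d} (hxs : x ∈ s) :
    gauge ((fun k => k - p) '' t) (x - p) ≤ gauge ((fun k => k - p) '' s) (x - p) := by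
  apply csInf_le_csInf ⟨0, fun r hr => le_of_lt hr.1⟩
  · exact ⟨1, one_pos, by rw [one_smul]; exact ⟨x, hxs, rfl⟩⟩
  · rintro r ⟨hr, w, ⟨z, hz, rfl⟩, hw⟩
    exact ⟨hr, ⟨z - p, ⟨z, hst hz, rfl⟩, hw⟩⟩


end AuxStmt7

/-- Hilbert polarity-expansion stability. -/
theorem hilbert_polar_expansion_stability {d : ℕ} (G K : Set (Euc d))
    (hG : IsConvexBody G) (hK : IsConvexBody K)
    (h0 : (0 : Euc d) ∈ interior G) (hGK : G ⊆ interior K)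
    (α : ℝ) (hα : 0 < α) (p x : Euc d)
    (hp : p ∈ polarSet K) (hx : x ∈ polarSet K) :
    hilbertDist (polarSet (hilbertExpand K G α)) p x ≤
        hilbertDist (polarSet G) p x + 2 * α ∧
    (hilbertDist (polarSet G) p x ≤ α →
      hilbertDist (polarSet (hilbertExpand K G α)) p x ≤ 3 * α) := by
  obtain ⟨hGc, hGconv, hGint⟩ := hG
  obtain ⟨g₀, hg₀i⟩ := hGint
  have hg₀ : g₀ ∈ G := interior_subset hg₀i
  have hGne : G.Nonempty := ⟨g₀, hg₀⟩
  -- G is contained in its expansion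
  have hsub : G ⊆ hilbertExpand K G α := by
    intro g hg
    refine ⟨hGK hg, ?_⟩
    have h0 : hilbertDist K g g = 0 := hilbertDist_self g
    have hle : sInf (hilbertDist K g '' G) ≤ hilbertDist K g g := by
      apply csInf_le
      · refine ⟨0, ?_⟩
        rintro v ⟨g', hg', rfl⟩
        exact hilbertDist_nonneg (hGK hg) (hGK hg')
      · exact ⟨g, hg, rfl⟩
    rw [h0] at hle
    linarith
  have hxPol : ∀ {q : Euc d}, q ∈ polarSet K → q ∈ polarSet G := by
    intro q hq g hg
    exact hq g (interior_subset (hGK hg))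
  have hxPol' : ∀ {q : Euc d}, q ∈ polarSet K → q ∈ polarSet (hilbertExpand K G α) := by
    intro q hq w hw
    exact le_of_lt (inner_lt_one_of_interior hw.1 hq)
  set P := polarSet G with hP
  set P' := polarSet (hilbertExpand K G α) with hP'
  set a := gauge ((fun k => k - p) '' P) (x - p) with hadef
  set b := gauge ((fun k => k - x) '' P) (p - x) with hbdef
  set a' := gauge ((fun k => k - p) '' P') (x - p) with ha'def
  set b' := gauge ((fun k => k - x) '' P') (p - x) with hb'def
  have hP'P : P' ⊆ P := fun z hz g hg => hz g (hsub hg)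
  have ha0 : 0 ≤ a := gauge_nonneg _
  have hb0 : 0 ≤ b := gauge_nonneg _
  have haa' : a ≤ a' := gauge_antitone_pair hP'P (hxPol' hx)
  have hbb' : b ≤ b' := gauge_antitone_pair hP'P (hxPol' hp)
  have ha'1 : a' ≤ 1 := gauge_sub_le_one (hxPol' hx)
  have hb'1 : b' ≤ 1 := gauge_sub_le_one (hxPol' hp)
  have ha1 : a ≤ 1 := gauge_sub_le_one (hxPol hx)
  have hb1 : b ≤ 1 := gauge_sub_le_one (hxPol hp)
  have hd'eq : hilbertDist P' p x = -(1/2) * Real.log ((1 - a') * (1 - b')) := rfl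
  have hdeq : hilbertDist P p x = -(1/2) * Real.log ((1 - a) * (1 - b)) := rfl
  have hmain : ∀ β : ℝ, α < β →
      hilbertDist P' p x ≤ hilbertDist P p x + 2 * β := by
    intro β hβ
    have hβpos : 0 < β := lt_trans hα hβ
    by_cases hA : a = 1
    · have hA' : a' = 1 := le_antisymm ha'1 (hA ▸ haa')
      rw [hd'eq, hdeq, hA, hA']
      simp only [sub_self, zero_mul, Real.log_zero, mul_zero, neg_zero]
      linarith
    by_cases hB : b = 1
    · have hB' : b' = 1 := le_antisymm hb'1 (hB ▸ hbb')
      rw [hd'eq, hdeq, hB, hB']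
      simp only [sub_self, mul_zero, Real.log_zero, neg_zero, zero_mul]
      linarith
    · have hAlt : a < 1 := lt_of_le_of_ne ha1 hA
      have hBlt : b < 1 := lt_of_le_of_ne hb1 hB
      set e := Real.exp (-(2 * β)) with he
      have he0 : 0 < e := Real.exp_pos _
      have hka : a' ≤ 1 - e * (1 - a) := key_gauge_bound hGne hGK hβ hβpos hp hx
      have hkb : b' ≤ 1 - e * (1 - b) := key_gauge_bound hGne hGK hβ hβpos hx hp
      have h1 : e * (1 - a) ≤ 1 - a' := by linarith
      have h2 : e * (1 - b) ≤ 1 - b' := by linarith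
      have hea : 0 < e * (1 - a) := by nlinarith
      have heb : 0 < e * (1 - b) := by nlinarith
      have hprod : (e * (1 - a)) * (e * (1 - b)) ≤ (1 - a') * (1 - b') :=
        mul_le_mul h1 h2 (le_of_lt heb) (by linarith)
      have hprodpos : 0 < (e * (1 - a)) * (e * (1 - b)) := mul_pos hea heb
      have hlog : Real.log ((e * (1 - a)) * (e * (1 - b))) ≤
          Real.log ((1 - a') * (1 - b')) :=
        Real.log_le_log hprodpos hprod
      have hcalc : Real.log ((e * (1 - a)) * (e * (1 - b))) =
          -(4 * β) + Real.log ((1 - a) * (1 - b)) := by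
        rw [show (e * (1 - a)) * (e * (1 - b)) = (e * e) * ((1 - a) * (1 - b)) by ring]
        rw [Real.log_mul (by positivity) (by nlinarith)]
        rw [he, ← Real.exp_add, Real.log_exp]
        ring
      rw [hd'eq, hdeq]
      rw [hcalc] at hlog
      linarith
  constructor
  · by_contra hcon
    push_neg at hcon
    set D := hilbertDist P' p x - hilbertDist P p x with hD
    have hD2 : 2 * α < D := by rw [hD]; linarith
    have := hmain (D / 2 / 2 + α / 2) (by linarith)
    linarith
  · intro h
    have h1 : hilbertDist P' p x ≤ hilbertDist P p x + 2 * α := by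
      by_contra hcon
      push_neg at hcon
      set D := hilbertDist P' p x - hilbertDist P p x with hD
      have hD2 : 2 * α < D := by rw [hD]; linarith
      have := hmain (D / 2 / 2 + α / 2) (by linarith)
      linarith
    linarith
end
end

section
/- There exists an absolute constant c ≥ 1 such that for every dimension d ≥ 2, every convex body K ⊆ ℝ^d, all radii 0 < r ≤ r′ ≤ 4, and every set U ⊆ int(K), one has N_K(U, r) ≤ c^{d} · (r′/r)^d · N_K(U, r′), where N_K(U,·) denotes the Hilbert covering number of U with respect to K. -/
open Set MeasureTheory Metric
open scoped Pointwise RealInnerProductSpace ENNReal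

noncomputable section

/-! ### Auxiliary development -/

namespace HilbertCovAux

variable {d : ℕ}

/-- The translate `K - z`, in the exact form used by `hilbertDist`. -/
def trB (K : Set (Euc d)) (z : Euc d) : Set (Euc d) := (fun k => k - z) '' K

lemma mem_trB {K : Set (Euc d)} {z a : Euc d} : a ∈ trB K z ↔ z + a ∈ K := by
  constructor
  · rintro ⟨k, hk, rfl⟩; simpa [add_sub_cancel] using hk
  · intro h; exact ⟨z + a, h, add_sub_cancel_left z a⟩

lemma hilbertDist_def (K : Set (Euc d)) (x y : Euc d) :
    hilbertDist K x y = -(1 / 2) * Real.log ((1 - gauge (trB K x) (y - x)) *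
      (1 - gauge (trB K y) (x - y))) := rfl

lemma mem_hilbertBall {K : Set (Euc d)} {x y : Euc d} {r : ℝ} :
    y ∈ hilbertBall K x r ↔ y ∈ interior K ∧ hilbertDist K x y ≤ r := Iff.rfl

lemma trB_eq_image (S : Set (Euc d)) (z : Euc d) :
    trB S z = (Homeomorph.addLeft (-z)) '' S := by
  ext a
  simp only [trB, Set.mem_image, Homeomorph.coe_addLeft, sub_eq_neg_add]

lemma convex_trB {K : Set (Euc d)} (cK : Convex ℝ K) (z : Euc d) : Convex ℝ (trB K z) := by
  have : trB K z = (fun k => -z + k) '' K := by simp only [trB, sub_eq_neg_add]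
  rw [this]; exact cK.translate (-z)

lemma isCompact_trB {K : Set (Euc d)} (hK : IsCompact K) (z : Euc d) : IsCompact (trB K z) :=
  hK.image (continuous_id.sub continuous_const)

lemma interior_trB (K : Set (Euc d)) (z : Euc d) :
    interior (trB K z) = trB (interior K) z := by
  rw [trB_eq_image, trB_eq_image, ← Homeomorph.image_interior]

lemma mem_interior_trB {K : Set (Euc d)} {z y : Euc d} :
    y - z ∈ interior (trB K z) ↔ y ∈ interior K := by
  rw [interior_trB]
  constructor
  · intro h
    have := (mem_trB (K := interior K)).1 h
    simpa [add_sub_cancel] using this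
  · intro h
    exact (mem_trB (K := interior K)).2 (by simpa [add_sub_cancel] using h)

lemma zero_mem_interior_trB {K : Set (Euc d)} {z : Euc d} (hz : z ∈ interior K) :
    (0 : Euc d) ∈ interior (trB K z) := by
  have := (mem_interior_trB (K := K) (z := z) (y := z)).2 hz
  simpa using this

/-- The recentered Macbeath region. -/
def mA (K : Set (Euc d)) (z : Euc d) : Set (Euc d) := trB K z ∩ (-(trB K z))

lemma mem_mA {K : Set (Euc d)} {z a : Euc d} : a ∈ mA K z ↔ z + a ∈ K ∧ z - a ∈ K := by
  simp only [mA, Set.mem_inter_iff, Set.mem_neg, mem_trB, sub_eq_add_neg]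

lemma mA_subset_trB {K : Set (Euc d)} {z : Euc d} : mA K z ⊆ trB K z := Set.inter_subset_left

lemma neg_mem_mA {K : Set (Euc d)} {z a : Euc d} (h : a ∈ mA K z) : -a ∈ mA K z := by
  rw [mem_mA] at h ⊢
  exact ⟨by simpa [sub_eq_add_neg] using h.2, by simpa [sub_eq_add_neg] using h.1⟩

lemma convex_mA {K : Set (Euc d)} (cK : Convex ℝ K) (z : Euc d) : Convex ℝ (mA K z) :=
  (convex_trB cK z).inter (convex_trB cK z).neg

lemma isCompact_mA {K : Set (Euc d)} (hK : IsCompact K) (z : Euc d) : IsCompact (mA K z) :=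
  (isCompact_trB hK z).inter_right (isCompact_trB hK z).neg.isClosed

lemma zero_mem_interior_mA {K : Set (Euc d)} {z : Euc d} (hz : z ∈ interior K) :
    (0 : Euc d) ∈ interior (mA K z) := by
  rw [mA, interior_inter]
  refine ⟨zero_mem_interior_trB hz, ?_⟩
  have h1 : interior (-(trB K z)) = -(interior (trB K z)) := by
    have := (Homeomorph.neg (Euc d)).image_interior (s := trB K z)
    simpa [Set.image_neg_eq_neg] using this.symm
  rw [h1]
  simpa using zero_mem_interior_trB hz

lemma zero_mem_mA {K : Set (Euc d)} {z : Euc d} (hz : z ∈ interior K) :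
    (0 : Euc d) ∈ mA K z :=
  interior_subset (zero_mem_interior_mA hz)

/-- Monotonicity of scaling for star-shaped sets. -/
lemma smul_subset_smul {s : Set (Euc d)} (hconv : Convex ℝ s) (h0 : (0 : Euc d) ∈ s)
    {a b : ℝ} (ha : 0 ≤ a) (hab : a ≤ b) (hb : 0 < b) : a • s ⊆ b • s := by
  rintro _ ⟨v, hv, rfl⟩
  have hst : StarConvex ℝ (0 : Euc d) s := hconv.starConvex h0
  have hmem : (a / b) • v ∈ s := hst.smul_mem hv (div_nonneg ha hb.le) (div_le_one_of_le₀ hab hb.le)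
  refine ⟨(a / b) • v, hmem, ?_⟩
  show b • ((a / b) • v) = a • v
  rw [smul_smul, mul_div_cancel₀ _ hb.ne']

/-- If the gauge of a closed convex neighbourhood of zero is at most `a > 0`,
the point lies in `a • s`. -/
lemma mem_smul_of_gauge_le {s : Set (Euc d)} (hconv : Convex ℝ s) (hcl : IsClosed s)
    (hnhds : s ∈ nhds (0 : Euc d)) {x : Euc d} {a : ℝ} (ha : 0 < a) (h : gauge s x ≤ a) :
    x ∈ a • s := by
  have hconv' : Convex ℝ (a • s) := hconv.smul a
  have hnhds' : a • s ∈ nhds (0 : Euc d) := by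
    have := smul_mem_nhds_smul₀ (ha.ne') hnhds
    simpa using this
  have hg : gauge (a • s) x ≤ 1 := by
    rw [gauge_smul_left_of_nonneg ha.le]
    simp only [Pi.smul_apply, smul_eq_mul]
    rw [inv_mul_le_iff₀ ha, mul_one]
    exact h
  have := (gauge_le_one_iff_mem_closure hconv' hnhds').1 hg
  rwa [(hcl.smul₀ a).closure_eq] at this

/-! ### The two key geometric lemmas -/

/-- If `y - z` lies in the `(1 - e^{-2r})/4`-scaled Macbeath region of `z`,
then `y` is in the Hilbert ball of radius `r` around `z`. -/
lemma mem_hilbertBall_of_mem_smul_mA {K : Set (Euc d)} (cK : Convex ℝ K)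
    {z y : Euc d} (hz : z ∈ interior K) {r : ℝ} (hr : 0 < r)
    (hy : y - z ∈ ((1 - Real.exp (-(2 * r))) / 4) • mA K z) :
    y ∈ hilbertBall K z r := by
  set σ : ℝ := (1 - Real.exp (-(2 * r))) / 4 with hσdef
  have hexp_lt : Real.exp (-(2 * r)) < 1 := Real.exp_lt_one_iff.2 (by linarith)
  have hexp_pos : 0 < Real.exp (-(2 * r)) := Real.exp_pos _
  have hσpos : 0 < σ := by rw [hσdef]; linarith
  have hσle : σ ≤ 1 / 4 := by rw [hσdef]; linarith
  obtain ⟨a, ha, hya⟩ := hy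
  have haK : z + a ∈ K ∧ z - a ∈ K := mem_mA.1 ha
  have hyz : y = z + σ • a := by
    have h : σ • a = y - z := hya
    exact (sub_eq_iff_eq_add'.1 h.symm)
  -- y is in the interior of K
  have hyint : y ∈ interior K := by
    have hc := cK.combo_interior_self_mem_interior hz haK.1 (a := 1 - σ) (b := σ)
      (by linarith) hσpos.le (by ring)
    have : (1 - σ) • z + σ • (z + a) = y := by
      rw [hyz]; module
    rwa [this] at hc
  refine mem_hilbertBall.2 ⟨hyint, ?_⟩
  -- first gauge
  have hg1 : gauge (trB K z) (y - z) ≤ σ := by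
    apply gauge_le_of_mem hσpos.le
    exact ⟨a, mA_subset_trB ha, hya⟩
  -- second gauge
  have hσne : (1 : ℝ) - σ ≠ 0 := ne_of_gt (by linarith : (0:ℝ) < 1 - σ)
  have hg2 : gauge (trB K y) (z - y) ≤ σ / (1 - σ) := by
    apply gauge_le_of_mem (div_nonneg hσpos.le (by linarith))
    refine ⟨(1 - σ) • (-a), ?_, ?_⟩
    · rw [mem_trB]
      have : y + (1 - σ) • (-a) = σ • (z + a) + (1 - σ) • (z - a) := by rw [hyz]; module
      rw [this]
      exact cK haK.1 haK.2 hσpos.le (by linarith) (by ring)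
    · show (σ / (1 - σ)) • ((1 - σ) • (-a)) = z - y
      rw [smul_smul]
      have h1 : σ / (1 - σ) * (1 - σ) = σ := div_mul_cancel₀ _ hσne
      rw [h1, hyz]; module
  -- now the logarithm estimate
  have hga : 0 ≤ gauge (trB K z) (y - z) := gauge_nonneg _
  have hgb : 0 ≤ gauge (trB K y) (z - y) := gauge_nonneg _
  have hσ' : σ / (1 - σ) ≤ 1 / 3 := by
    rw [div_le_div_iff₀ (by linarith) (by norm_num)]
    linarith
  have hkey : Real.exp (-(2 * r)) ≤
      (1 - gauge (trB K z) (y - z)) * (1 - gauge (trB K y) (z - y)) := by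
    have hb1 : 1 - σ ≤ 1 - gauge (trB K z) (y - z) := by linarith
    have hb2 : 1 - σ / (1 - σ) ≤ 1 - gauge (trB K y) (z - y) := by linarith
    have hprod : (1 - σ) * (1 - σ / (1 - σ)) ≤
        (1 - gauge (trB K z) (y - z)) * (1 - gauge (trB K y) (z - y)) := by
      apply mul_le_mul hb1 hb2 (by linarith) (by linarith)
    have heq : (1 - σ) * (1 - σ / (1 - σ)) = 1 - 2 * σ := by
      field_simp; ring
    rw [heq] at hprod
    have : Real.exp (-(2 * r)) ≤ 1 - 2 * σ := by
      rw [hσdef]; linarith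
    linarith
  have hppos : (0:ℝ) < (1 - gauge (trB K z) (y - z)) * (1 - gauge (trB K y) (z - y)) :=
    lt_of_lt_of_le hexp_pos hkey
  have hlog : -(2 * r) ≤ Real.log ((1 - gauge (trB K z) (y - z)) *
      (1 - gauge (trB K y) (z - y))) := by
    have := Real.log_le_log hexp_pos hkey
    rwa [Real.log_exp] at this
  rw [hilbertDist_def]
  linarith

/-- Containment of the Hilbert ball in a dilated Macbeath region, and
the Macbeath region comparison for a point of the ball. -/
lemma hilbertBall_subset_smul_mA {K : Set (Euc d)} (hK : IsCompact K) (cK : Convex ℝ K)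
    {z y : Euc d} (hz : z ∈ interior K) {r' : ℝ} (hr' : 0 < r')
    (hy : y ∈ hilbertBall K z r') :
    y - z ∈ ((1 - Real.exp (-(2 * r'))) / Real.exp (-(2 * r'))) • mA K z ∧
      Real.exp (-(2 * r')) • mA K z ⊆ mA K y := by
  obtain ⟨hyint, hd⟩ := mem_hilbertBall.1 hy
  set β : ℝ := 1 - Real.exp (-(2 * r')) with hβdef
  have hE : Real.exp (-(2 * r')) = 1 - β := by rw [hβdef]; ring
  have hexp_lt : Real.exp (-(2 * r')) < 1 := Real.exp_lt_one_iff.2 (by linarith)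
  have hexp_pos : 0 < Real.exp (-(2 * r')) := Real.exp_pos _
  have hβpos : 0 < β := by rw [hβdef]; linarith
  have hβlt1 : β < 1 := by rw [hβdef]; linarith
  -- gauges are < 1
  have hg1lt : gauge (trB K z) (y - z) < 1 :=
    interior_subset_gauge_lt_one _ (mem_interior_trB.2 hyint)
  have hg2lt : gauge (trB K y) (z - y) < 1 :=
    interior_subset_gauge_lt_one _ (mem_interior_trB.2 hz)
  have hga : 0 ≤ gauge (trB K z) (y - z) := gauge_nonneg _
  have hgb : 0 ≤ gauge (trB K y) (z - y) := gauge_nonneg _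
  have hppos : (0:ℝ) < (1 - gauge (trB K z) (y - z)) * (1 - gauge (trB K y) (z - y)) :=
    mul_pos (by linarith) (by linarith)
  rw [hilbertDist_def] at hd
  have hlog : -(2 * r') ≤ Real.log ((1 - gauge (trB K z) (y - z)) *
      (1 - gauge (trB K y) (z - y))) := by linarith
  have hprod : Real.exp (-(2 * r')) ≤ (1 - gauge (trB K z) (y - z)) *
      (1 - gauge (trB K y) (z - y)) := by
    have := Real.exp_le_exp.2 hlog
    rwa [Real.exp_log hppos] at this
  have hg1 : gauge (trB K z) (y - z) ≤ β := by
    have h2le : (1 - gauge (trB K z) (y - z)) * (1 - gauge (trB K y) (z - y)) ≤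
        1 - gauge (trB K z) (y - z) := by nlinarith
    rw [hβdef]; linarith
  have hg2 : gauge (trB K y) (z - y) ≤ β := by
    have h2le : (1 - gauge (trB K z) (y - z)) * (1 - gauge (trB K y) (z - y)) ≤
        1 - gauge (trB K y) (z - y) := by nlinarith
    rw [hβdef]; linarith
  -- membership in dilates of the translated bodies
  have hzmem : y - z ∈ β • trB K z :=
    mem_smul_of_gauge_le (convex_trB cK z) (isCompact_trB hK z).isClosed
      (mem_interior_iff_mem_nhds.1 (zero_mem_interior_trB hz)) hβpos hg1
  have hymem : z - y ∈ β • trB K y :=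
    mem_smul_of_gauge_le (convex_trB cK y) (isCompact_trB hK y).isClosed
      (mem_interior_iff_mem_nhds.1 (zero_mem_interior_trB hyint)) hβpos hg2
  constructor
  · -- y - z ∈ (β/(1-β)) • mA K z
    set t' : ℝ := β / (1 - β) with ht'def
    have ht'pos : 0 < t' := div_pos hβpos (by linarith)
    have hβt' : β ≤ t' := by
      rw [ht'def, le_div_iff₀ (by linarith)]
      nlinarith
    -- part 1 : y - z ∈ t' • trB K z
    have hmem1 : y - z ∈ t' • trB K z :=
      smul_subset_smul (convex_trB cK z) (mem_trB.2 (by simpa using interior_subset hz))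
        hβpos.le hβt' ht'pos hzmem
    -- part 2 : y - z = t' • (-k') with k' ∈ trB K z
    obtain ⟨k, hk, hkk⟩ := hymem
    have hk' : k + (y - z) ∈ trB K z := by
      rw [mem_trB]
      have : z + (k + (y - z)) = y + k := by abel
      rw [this]
      exact mem_trB.1 hk
    have heq2 : y - z = t' • (-(k + (y - z))) := by
      have h1 : β • k = z - y := hkk
      rw [ht'def]
      rw [div_eq_mul_inv, mul_comm, ← smul_smul]
      rw [show β • (-(k + (y - z))) = -(β • k) - β • (y-z) by module, h1]
      rw [show -(z - y) - β • (y - z) = (1 - β) • (y - z) by module]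
      rw [smul_smul, inv_mul_cancel₀ (by linarith : (1:ℝ) - β ≠ 0), one_smul]
    obtain ⟨u, hu, huu⟩ := hmem1
    have huu' : t' • u = y - z := huu
    have hueq : u = -(k + (y - z)) := by
      have h2 : t' • u = t' • (-(k + (y - z))) := by rw [huu', ← heq2]
      exact smul_right_injective _ ht'pos.ne' h2
    rw [hE]
    refine ⟨u, ⟨hu, ?_⟩, huu⟩
    rw [Set.mem_neg, hueq]
    simpa using hk'
  · -- (1-β) • mA K z ⊆ mA K y
    rw [hE]
    rintro _ ⟨a, ha, rfl⟩
    obtain ⟨haK1, haK2⟩ := mem_mA.1 ha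
    obtain ⟨k₀, hk₀, hk₀y⟩ := hzmem
    have hk₀K : z + k₀ ∈ K := mem_trB.1 hk₀
    have hy' : y = z + β • k₀ := by
      have h : β • k₀ = y - z := hk₀y
      exact (sub_eq_iff_eq_add'.1 h.symm)
    rw [mem_mA]
    constructor
    · have : y + (1 - β) • a = β • (z + k₀) + (1 - β) • (z + a) := by rw [hy']; module
      rw [this]
      exact cK hk₀K haK1 hβpos.le (by linarith) (by ring)
    · have : y - (1 - β) • a = β • (z + k₀) + (1 - β) • (z - a) := by rw [hy']; module
      rw [this]
      exact cK hk₀K haK2 hβpos.le (by linarith) (by ring)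

/-! ### Constant arithmetic -/

lemma const_bound {r r' : ℝ} (hr : 0 < r) (h1 : r ≤ r') (h2 : r' ≤ 4) :
    (1 - Real.exp (-(2 * r'))) / Real.exp (-(2 * r'))
      + Real.exp (-(2 * r')) * ((1 - Real.exp (-(2 * r))) / 4) / 2
      ≤ Real.exp 30 * (r' / r) *
        (Real.exp (-(2 * r')) * ((1 - Real.exp (-(2 * r))) / 4) / 2) := by
  have hr' : 0 < r' := lt_of_lt_of_le hr h1
  set E' := Real.exp (-(2 * r')) with hE'
  set e := Real.exp (-(2 * r)) with he
  have hE'pos : 0 < E' := Real.exp_pos _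
  have hepos : 0 < e := Real.exp_pos _
  have hE'le1 : E' ≤ 1 := Real.exp_le_one_iff.2 (by linarith)
  have hele1 : e ≤ 1 := Real.exp_le_one_iff.2 (by linarith)
  have hE'inv : E' * Real.exp (2 * r') = 1 := by
    rw [hE', ← Real.exp_add]; norm_num
  have heinv : e * Real.exp (2 * r) = 1 := by
    rw [he, ← Real.exp_add]; norm_num
  have hf1 : 1 - E' ≤ 2 * r' := by
    have := Real.add_one_le_exp (-(2 * r')); rw [← hE'] at this; linarith
  have hf1r : 1 - e ≤ 2 * r := by
    have := Real.add_one_le_exp (-(2 * r)); rw [← he] at this; linarith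
  have hf2 : Real.exp (-(8:ℝ)) ≤ E' := Real.exp_le_exp.2 (by linarith)
  have hf2r : Real.exp (-(8:ℝ)) ≤ e := Real.exp_le_exp.2 (by linarith)
  have hexp8pos : 0 < Real.exp (8:ℝ) := Real.exp_pos _
  have hexp8inv : Real.exp (-(8:ℝ)) * Real.exp (8:ℝ) = 1 := by
    rw [← Real.exp_add]; norm_num
  have hexp8ge1 : 1 ≤ Real.exp (8:ℝ) := Real.one_le_exp (by norm_num)
  -- 1 - e ≥ 2 r e
  have h1me : 2 * r * e ≤ 1 - e := by
    have hh := Real.add_one_le_exp (2 * r)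
    nlinarith
  -- t' ≤ 2 r' exp 8
  have ht'up : (1 - E') / E' ≤ 2 * r' * Real.exp (8:ℝ) := by
    rw [div_le_iff₀ hE'pos]
    have hE8 : 1 ≤ Real.exp (8:ℝ) * E' := by nlinarith
    nlinarith
  -- lower bound for ε/2
  have hexp16 : Real.exp (-(8:ℝ)) * Real.exp (-(8:ℝ)) = Real.exp (-(16:ℝ)) := by
    rw [← Real.exp_add]; norm_num
  have hεlow : r * Real.exp (-(16:ℝ)) / 4 ≤ E' * ((1 - e) / 4) / 2 := by
    have hexpneg8pos : 0 < Real.exp (-(8:ℝ)) := Real.exp_pos _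
    have s1 : Real.exp (-(8:ℝ)) * (2 * r * e) ≤ E' * (1 - e) := by
      have a1 : Real.exp (-(8:ℝ)) * (2 * r * e) ≤ E' * (2 * r * e) :=
        mul_le_mul_of_nonneg_right hf2 (by positivity)
      have a2 : E' * (2 * r * e) ≤ E' * (1 - e) :=
        mul_le_mul_of_nonneg_left h1me hE'pos.le
      linarith
    have s2 : Real.exp (-(8:ℝ)) * (2 * r * Real.exp (-(8:ℝ))) ≤
        Real.exp (-(8:ℝ)) * (2 * r * e) := by
      apply mul_le_mul_of_nonneg_left _ hexpneg8pos.le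
      apply mul_le_mul_of_nonneg_left hf2r (by positivity)
    have s3 : Real.exp (-(8:ℝ)) * (2 * r * Real.exp (-(8:ℝ))) = 2 * r * Real.exp (-(16:ℝ)) := by
      rw [← hexp16]; ring
    linarith
  -- upper bound for ε/2
  have hεup : E' * ((1 - e) / 4) / 2 ≤ r' / 4 := by nlinarith
  -- the numeric inequality 8 exp 8 + 1 ≤ exp 14
  have hexp3 : (4:ℝ) ≤ Real.exp 3 := by
    have := Real.add_one_le_exp (3:ℝ); linarith
  have hexp6 : (16:ℝ) ≤ Real.exp 6 := by
    have h6 : Real.exp (6:ℝ) = Real.exp 3 * Real.exp 3 := by rw [← Real.exp_add]; norm_num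
    have h44 : (4:ℝ) * 4 ≤ Real.exp 3 * Real.exp 3 :=
      mul_le_mul hexp3 hexp3 (by norm_num) (Real.exp_pos _).le
    linarith
  have hexp14 : Real.exp (14:ℝ) = Real.exp (8:ℝ) * Real.exp (6:ℝ) := by
    rw [← Real.exp_add]; norm_num
  have hnum : 8 * Real.exp (8:ℝ) + 1 ≤ Real.exp (14:ℝ) := by
    have h16 : Real.exp (8:ℝ) * 16 ≤ Real.exp (8:ℝ) * Real.exp (6:ℝ) :=
      mul_le_mul_of_nonneg_left hexp6 hexp8pos.le
    rw [hexp14]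
    linarith
  -- assemble
  have hC : Real.exp (30:ℝ) * Real.exp (-(16:ℝ)) = Real.exp (14:ℝ) := by
    rw [← Real.exp_add]; norm_num
  have hCpos : 0 < Real.exp (30:ℝ) * (r' / r) := by positivity
  have hRHS : Real.exp (14:ℝ) * r' / 4 ≤
      Real.exp 30 * (r' / r) * (E' * ((1 - e) / 4) / 2) := by
    have step : Real.exp 30 * (r' / r) * (r * Real.exp (-(16:ℝ)) / 4) ≤
        Real.exp 30 * (r' / r) * (E' * ((1 - e) / 4) / 2) := by
      apply mul_le_mul_of_nonneg_left hεlow hCpos.le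
    have heq : Real.exp 30 * (r' / r) * (r * Real.exp (-(16:ℝ)) / 4)
        = Real.exp (14:ℝ) * r' / 4 := by
      rw [← hC]
      field_simp
    linarith
  have hLHS : (1 - E') / E' + E' * ((1 - e) / 4) / 2 ≤
      2 * r' * Real.exp (8:ℝ) + r' / 4 := by linarith
  have hfinal : 2 * r' * Real.exp (8:ℝ) + r' / 4 ≤ Real.exp (14:ℝ) * r' / 4 := by
    have hmul : (8 * Real.exp (8:ℝ) + 1) * (r' / 4) ≤ Real.exp (14:ℝ) * (r' / 4) :=
      mul_le_mul_of_nonneg_right hnum (by positivity)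
    have : (8 * Real.exp (8:ℝ) + 1) * (r' / 4) = 2 * r' * Real.exp (8:ℝ) + r' / 4 := by ring
    linarith
  linarith

/-! ### Covering one Hilbert ball by smaller ones -/

lemma ball_cover {K : Set (Euc d)} (hK : IsCompact K) (cK : Convex ℝ K)
    {z : Euc d} (hz : z ∈ interior K) {r r' : ℝ} (hr : 0 < r) (hrr' : r ≤ r')
    (hr4 : r' ≤ 4) :
    ∃ P : Finset (Euc d), (↑P : Set (Euc d)) ⊆ interior K ∧
      (hilbertBall K z r' ⊆ ⋃ p ∈ P, hilbertBall K p r) ∧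
      ((P.card : ℝ) ≤ (Real.exp 30 * (r' / r)) ^ d) := by
  classical
  have hr' : 0 < r' := lt_of_lt_of_le hr hrr'
  set E' := Real.exp (-(2 * r')) with hE'
  set e := Real.exp (-(2 * r)) with he
  have hE'pos : 0 < E' := Real.exp_pos _
  have hepos : 0 < e := Real.exp_pos _
  have hE'lt1 : E' < 1 := Real.exp_lt_one_iff.2 (by linarith)
  have helt1 : e < 1 := Real.exp_lt_one_iff.2 (by linarith)
  set σ : ℝ := (1 - e) / 4 with hσ
  set ε : ℝ := E' * σ with hε
  set t' : ℝ := (1 - E') / E' with ht'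
  have hσpos : 0 < σ := by rw [hσ]; linarith
  have hεpos : 0 < ε := mul_pos hE'pos hσpos
  have ht'pos : 0 < t' := div_pos (by linarith) hE'pos
  set A := mA K z with hA
  have hAconv : Convex ℝ A := convex_mA cK z
  have hA0 : (0 : Euc d) ∈ A := zero_mem_mA hz
  set S := hilbertBall K z r' with hS
  have hSsub : S ⊆ interior K := fun y hy => (mem_hilbertBall.1 hy).1
  -- the family of packings
  set Pk : Set (Finset (Euc d)) :=
    {P | (↑P : Set (Euc d)) ⊆ S ∧ ∀ p ∈ P, ∀ q ∈ P, p ≠ q → p - q ∉ ε • A} with hPk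
  -- cardinality bound for every packing
  have cardbound : ∀ P ∈ Pk, (P.card : ℝ) * (ε / 2) ^ d ≤ (t' + ε / 2) ^ d := by
    rintro P ⟨hPS, hPsep⟩
    set f : Euc d → Set (Euc d) := fun p => p +ᵥ (ε / 2) • A with hf
    have hdisj : ∀ p ∈ P, ∀ q ∈ P, p ≠ q → Disjoint (f p) (f q) := by
      intro p hp q hq hpq
      rw [Set.disjoint_left]
      rintro x ⟨a₁, ha₁, hx₁⟩ ⟨a₂, ha₂, hx₂⟩
      obtain ⟨b₁, hb₁, rfl⟩ := ha₁
      obtain ⟨b₂, hb₂, rfl⟩ := ha₂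
      have hx₁' : p + (ε / 2) • b₁ = x := hx₁
      have hx₂' : q + (ε / 2) • b₂ = x := hx₂
      have hmid : (1/2 : ℝ) • b₂ + (1/2 : ℝ) • (-b₁) ∈ A :=
        hAconv hb₂ (neg_mem_mA hb₁) (by norm_num) (by norm_num) (by norm_num)
      refine hPsep p hp q hq hpq ⟨(1/2 : ℝ) • b₂ + (1/2 : ℝ) • (-b₁), hmid, ?_⟩
      show ε • ((1/2 : ℝ) • b₂ + (1/2 : ℝ) • (-b₁)) = p - q
      have : p - q = (ε / 2) • b₂ - (ε / 2) • b₁ := by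
        rw [← hx₁'] at hx₂'
        linear_combination (norm := module) - hx₂'
      rw [this]; module
    -- each piece sits inside the dilated Macbeath region around z
    have hsub : ∀ p ∈ P, f p ⊆ z +ᵥ (t' + ε / 2) • A := by
      intro p hp
      have hpS : p ∈ S := hPS hp
      have hpz : p - z ∈ t' • A := (hilbertBall_subset_smul_mA hK cK hz hr' hpS).1
      rintro x ⟨a, ha, rfl⟩
      refine ⟨(p - z) + a, ?_, by simp only [vadd_eq_add]; abel⟩
      rw [hAconv.add_smul ht'pos.le (by positivity)]
      exact Set.add_mem_add hpz ha
    have hμAfin : volume A ≠ ⊤ := (isCompact_mA hK z).measure_lt_top.ne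
    have hμApos : volume A ≠ 0 :=
      (Measure.measure_pos_of_nonempty_interior _ ⟨0, zero_mem_interior_mA hz⟩).ne'
    have hfrank : Module.finrank ℝ (Euc d) = d := finrank_euclideanSpace_fin
    have hmeas : ∀ c : ℝ, 0 ≤ c → ∀ v : Euc d,
        volume (v +ᵥ c • A) = ENNReal.ofReal (c ^ d) * volume A := by
      intro c hc v
      rw [measure_vadd, Measure.addHaar_smul, hfrank, abs_of_nonneg (by positivity)]
    have hUnion : volume (⋃ p ∈ P, f p) = ∑ p ∈ P, volume (f p) := by
      apply measure_biUnion_finset₀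
      · intro p hp q hq hpq
        exact (hdisj p hp q hq hpq).aedisjoint
      · intro p hp
        exact (((hAconv.smul (ε / 2)).vadd p).nullMeasurableSet _)
    have hsum : ∑ p ∈ P, volume (f p) =
        (P.card : ℝ≥0∞) * (ENNReal.ofReal ((ε / 2) ^ d) * volume A) := by
      rw [Finset.sum_congr rfl (fun p _ => hmeas (ε / 2) (by positivity) p)]
      rw [Finset.sum_const, nsmul_eq_mul]
    have hle : (P.card : ℝ≥0∞) * (ENNReal.ofReal ((ε / 2) ^ d) * volume A) ≤
        ENNReal.ofReal ((t' + ε / 2) ^ d) * volume A := by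
      rw [← hsum, ← hUnion, ← hmeas (t' + ε / 2) (by positivity) z]
      exact measure_mono (Set.iUnion₂_subset hsub)
    rw [← mul_assoc] at hle
    have hle2 : (P.card : ℝ≥0∞) * ENNReal.ofReal ((ε / 2) ^ d) ≤
        ENNReal.ofReal ((t' + ε / 2) ^ d) :=
      (ENNReal.mul_le_mul_iff_left hμApos hμAfin).1 hle
    have hfin : (P.card : ℝ≥0∞) * ENNReal.ofReal ((ε / 2) ^ d) ≠ ⊤ :=
      ENNReal.mul_ne_top (ENNReal.natCast_ne_top _) ENNReal.ofReal_ne_top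
    have := ENNReal.toReal_mono ENNReal.ofReal_ne_top hle2
    rw [ENNReal.toReal_mul, ENNReal.toReal_natCast, ENNReal.toReal_ofReal (by positivity),
      ENNReal.toReal_ofReal (by positivity)] at this
    exact this
  -- the uniform real bound for packings
  have cardbound' : ∀ P ∈ Pk, (P.card : ℝ) ≤ (Real.exp 30 * (r' / r)) ^ d := by
    intro P hP
    have h1 := cardbound P hP
    have hkey : t' + ε / 2 ≤ Real.exp 30 * (r' / r) * (ε / 2) := by
      have := const_bound hr hrr' hr4
      rw [← hE', ← he] at this
      calc t' + ε / 2 = (1 - E') / E' + E' * ((1 - e) / 4) / 2 := by rw [ht', hε, hσ]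
        _ ≤ Real.exp 30 * (r' / r) * (E' * ((1 - e) / 4) / 2) := this
        _ = Real.exp 30 * (r' / r) * (ε / 2) := by rw [hε, hσ]
    have h2 : (t' + ε / 2) ^ d ≤ (Real.exp 30 * (r' / r)) ^ d * (ε / 2) ^ d := by
      rw [← mul_pow]
      exact pow_le_pow_left₀ (by positivity) hkey d
    have h3 : (P.card : ℝ) * (ε / 2) ^ d ≤
        ((Real.exp 30 * (r' / r)) ^ d) * (ε / 2) ^ d := le_trans h1 h2
    exact le_of_mul_le_mul_right h3 (by positivity)
  -- choose a maximal packing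
  set Cs : Set ℕ := Finset.card '' Pk with hCs
  have hCs_ne : Cs.Nonempty := ⟨0, ⟨∅, ⟨by simp, by simp⟩, rfl⟩⟩
  have hCs_bdd : BddAbove Cs := by
    refine ⟨⌊(Real.exp 30 * (r' / r)) ^ d⌋₊, ?_⟩
    rintro n ⟨P, hP, rfl⟩
    exact Nat.le_floor (cardbound' P hP)
  obtain ⟨P, hPPk, hPcard⟩ := Nat.sSup_mem hCs_ne hCs_bdd
  -- maximality gives the covering property
  have hcover : ∀ y ∈ S, ∃ p ∈ P, y - p ∈ ε • A := by
    intro y hyS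
    by_contra hcon
    push_neg at hcon
    have hynotP : y ∉ P := by
      intro hyP
      exact hcon y hyP ⟨0, hA0, by simp⟩
    set P' : Finset (Euc d) := insert y P with hP'
    have hP'Pk : P' ∈ Pk := by
      constructor
      · rw [hP', Finset.coe_insert]
        exact Set.insert_subset hyS hPPk.1
      · intro p hp q hq hpq
        rw [hP', Finset.mem_insert] at hp hq
        rcases hp with rfl | hp
        · rcases hq with rfl | hq
          · exact absurd rfl hpq
          · exact hcon q hq
        · rcases hq with rfl | hq
          · intro hmem
            obtain ⟨a, ha, haa⟩ := hmem
            have haa' : ε • a = p - q := haa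
            exact hcon p hp ⟨-a, neg_mem_mA ha, by
              show ε • (-a) = q - p
              rw [show q - p = -(p - q) by abel, ← haa']
              module⟩
          · exact hPPk.2 p hp q hq hpq
    have hcard' : P'.card = P.card + 1 := Finset.card_insert_of_notMem hynotP
    have hle : P'.card ≤ sSup Cs := le_csSup hCs_bdd ⟨P', hP'Pk, rfl⟩
    omega
  refine ⟨P, ?_, ?_, ?_⟩
  · exact subset_trans hPPk.1 hSsub
  · intro y hyS
    obtain ⟨p, hpP, hyp⟩ := hcover y hyS
    have hpS : p ∈ S := hPPk.1 hpP
    have hpint : p ∈ interior K := hSsub hpS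
    have hcomp : E' • mA K z ⊆ mA K p :=
      (hilbertBall_subset_smul_mA hK cK hz hr' hpS).2
    have hyp' : y - p ∈ σ • mA K p := by
      obtain ⟨a, ha, haa⟩ := hyp
      have haa' : ε • a = y - p := haa
      refine ⟨E' • a, hcomp (Set.smul_mem_smul_set ha), ?_⟩
      show σ • (E' • a) = y - p
      rw [smul_smul, ← haa', hε]
      rw [mul_comm]
    have := mem_hilbertBall_of_mem_smul_mA cK hpint hr (by rw [← he]; exact hyp')
    exact Set.mem_biUnion hpP this
  · exact cardbound' P hPPk

lemma hilbertBall_mono {K : Set (Euc d)} {x : Euc d} {r r' : ℝ} (h : r ≤ r') :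
    hilbertBall K x r ⊆ hilbertBall K x r' := fun _ hy => ⟨hy.1, hy.2.trans h⟩

end HilbertCovAux

open HilbertCovAux in
/-- Hilbert covering bound under change of radius. -/
theorem hilbert_cover_radius_change :
    ∃ c : ℝ, 1 ≤ c ∧ ∀ d : ℕ, 2 ≤ d →
      ∀ K : Set (Euc d), IsConvexBody K →
        ∀ r r' : ℝ, 0 < r → r ≤ r' → r' ≤ 4 →
          ∀ U : Set (Euc d), U ⊆ interior K →
            (hilbertCov K U r : ℝ) ≤ c ^ d * (r' / r) ^ d * (hilbertCov K U r' : ℝ) := by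
  classical
  refine ⟨Real.exp 30, Real.one_le_exp (by norm_num), ?_⟩
  intro d _hd K hKbody r r' hr hrr' hr4 U hU
  obtain ⟨hK, cK, hKint⟩ := hKbody
  have hr' : 0 < r' := lt_of_lt_of_le hr hrr'
  set T : Set ℕ := {m : ℕ | ∃ x : Fin m → Euc d, (∀ i, x i ∈ interior K) ∧
    U ⊆ ⋃ i, hilbertBall K (x i) r} with hT
  set T' : Set ℕ := {m : ℕ | ∃ x : Fin m → Euc d, (∀ i, x i ∈ interior K) ∧
    U ⊆ ⋃ i, hilbertBall K (x i) r'} with hT'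
  have hcovT : hilbertCov K U r = sInf T := rfl
  have hcovT' : hilbertCov K U r' = sInf T' := rfl
  by_cases hne : T'.Nonempty
  · -- main case
    obtain ⟨x, hxint, hxcov⟩ := Nat.sInf_mem hne
    set m' := sInf T' with hm'
    set M : ℕ := ⌊(Real.exp 30 * (r' / r)) ^ d⌋₊ with hM
    obtain ⟨z₀, hz₀⟩ := hKint
    -- covers of the individual balls
    choose P hPint hPcov hPcard using fun i : Fin m' =>
      ball_cover hK cK (hxint i) hr hrr' hr4
    have hcardM : ∀ i, (P i).card ≤ M := fun i => Nat.le_floor (hPcard i)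
    set g : Fin m' → Fin M → Euc d := fun i j => ((P i).toList.getD j z₀) with hg
    have hgmem : ∀ i j, g i j ∈ interior K := by
      intro i j
      by_cases hj : (j : ℕ) < (P i).toList.length
      · rw [hg]
        simp only
        rw [List.getD_eq_getElem _ _ hj]
        exact hPint i (by
          have := List.getElem_mem hj
          rwa [Finset.mem_toList] at this)
      · rw [hg]
        simp only
        rw [List.getD_eq_default _ _ (not_lt.1 hj)]
        exact hz₀
    have hgsurj : ∀ i, ∀ p ∈ P i, ∃ j : Fin M, g i j = p := by
      intro i p hp
      have hp' : p ∈ (P i).toList := Finset.mem_toList.2 hp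
      obtain ⟨n, hn, hget⟩ := List.mem_iff_getElem.1 hp'
      have hlen : (P i).toList.length = (P i).card := Finset.length_toList _
      have hnM : n < M := lt_of_lt_of_le (by rw [← hlen]; exact hn) (hcardM i)
      refine ⟨⟨n, hnM⟩, ?_⟩
      rw [hg]
      simp only
      rw [List.getD_eq_getElem _ _ (by simpa using hn)]
      exact hget
    -- global system of centers
    set y : Fin (m' * M) → Euc d := fun k =>
      g (finProdFinEquiv.symm k).1 (finProdFinEquiv.symm k).2 with hy
    have hmem : m' * M ∈ T := by
      refine ⟨y, fun k => hgmem _ _, ?_⟩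
      intro u hu
      have := hxcov hu
      obtain ⟨i, hi⟩ := Set.mem_iUnion.1 this
      have := hPcov i hi
      obtain ⟨p, hp, hup⟩ := Set.mem_iUnion₂.1 this
      obtain ⟨j, hj⟩ := hgsurj i p hp
      refine Set.mem_iUnion.2 ⟨finProdFinEquiv (i, j), ?_⟩
      rw [hy]
      simp only [Equiv.symm_apply_apply]
      rw [hj]
      exact hup
    have hle : sInf T ≤ m' * M := Nat.sInf_le hmem
    rw [hcovT, hcovT']
    calc ((sInf T : ℕ) : ℝ) ≤ ((m' * M : ℕ) : ℝ) := by exact_mod_cast hle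
      _ = (m' : ℝ) * M := by push_cast; ring
      _ ≤ (m' : ℝ) * (Real.exp 30 * (r' / r)) ^ d := by
          apply mul_le_mul_of_nonneg_left (Nat.floor_le (by positivity)) (by positivity)
      _ = Real.exp 30 ^ d * (r' / r) ^ d * (m' : ℝ) := by rw [mul_pow]; ring
  · -- no finite cover at scale r' ⇒ none at scale r either
    have hTempty : T = ∅ := by
      rw [Set.eq_empty_iff_forall_notMem]
      intro m hm
      obtain ⟨x, hxint, hxcov⟩ := hm
      exact hne ⟨m, x, hxint, hxcov.trans
        (Set.iUnion_mono fun i => hilbertBall_mono hrr')⟩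
    have hT'empty : T' = ∅ := Set.not_nonempty_iff_eq_empty.1 hne
    rw [hcovT, hcovT', hTempty, hT'empty, Nat.sInf_empty]
    simp
end
end

section
/- There exists a constant c₀ > 1 (independent of the dimension and of the body) such that for every dimension d ≥ 2, every convex body K ⊆ ℝ^d, every x ∈ int(K), and every y ∈ int(K) with d_H^K(x,y) ≤ 8, one has (1/c₀)·A(x) ⊆ B_y ⊆ c₀·A(x), where A(x) := (K ∩ (2x − K)) − x is the recentered Macbeath region at x and B_y := {v ∈ ℝ^d : ‖v‖_{K−y} + ‖−v‖_{K−y} ≤ 2} is the Hilbert Finsler unit ball at y. -/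
open Set MeasureTheory Metric
open scoped Pointwise RealInnerProductSpace ENNReal

noncomputable section

section Helpers

open scoped Topology

variable {d : ℕ} {K : Set (Euc d)}

lemma mem_sub_image {z w : Euc d} : w ∈ (fun k => k - z) '' K ↔ z + w ∈ K := by
  constructor
  · rintro ⟨k, hk, rfl⟩; simpa using hk
  · intro h; exact ⟨z + w, h, add_sub_cancel_left z w⟩

lemma sub_image_convex (hK : Convex ℝ K) (z : Euc d) :
    Convex ℝ ((fun k => k - z) '' K) := by
  have : (fun k : Euc d => k - z) '' K = (fun k => -z + k) '' K := by
    simp [sub_eq_neg_add]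
  rw [this]
  exact hK.translate (-z)

lemma sub_image_mem_nhds {z : Euc d} (hz : z ∈ interior K) :
    (fun k => k - z) '' K ∈ 𝓝 (0 : Euc d) := by
  have h := (Homeomorph.subRight z).isOpenMap.image_mem_nhds
    (mem_interior_iff_mem_nhds.1 hz)
  simpa using h

lemma gauge_lt_one_of_interior (hK : Convex ℝ K) {z w : Euc d} (hz : z ∈ interior K)
    (hw : w ∈ interior K) : gauge ((fun k => k - z) '' K) (w - z) < 1 := by
  rw [gauge_lt_one_iff_mem_interior (sub_image_convex hK z) (sub_image_mem_nhds hz)]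
  have : (fun k => k - z) '' interior K = interior ((fun k => k - z) '' K) :=
    (Homeomorph.subRight z).image_interior K
  rw [← this]
  exact ⟨w, hw, rfl⟩

lemma mem_of_gauge_le_one (hK : IsConvexBody K) {z w : Euc d} (hz : z ∈ interior K)
    (h : gauge ((fun k => k - z) '' K) w ≤ 1) : z + w ∈ K := by
  rw [← mem_sub_image]
  have hcl : closure ((fun k : Euc d => k - z) '' K) = (fun k : Euc d => k - z) '' K :=
    ((hK.1.image (continuous_id.sub continuous_const)).isClosed).closure_eq
  have := (gauge_le_one_iff_mem_closure (sub_image_convex hK.2.1 z)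
    (sub_image_mem_nhds hz)).1 h
  rwa [hcl] at this

lemma mem_macbeathA {x v : Euc d} :
    v ∈ macbeathA K x ↔ x + v ∈ K ∧ x - v ∈ K := by
  constructor
  · rintro ⟨k, ⟨hk1, k', hk', rfl⟩, rfl⟩
    constructor
    · convert hk1 using 1; exact add_sub_cancel x _
    · convert hk' using 1
      simp only [two_smul]; abel
  · rintro ⟨h1, h2⟩
    refine ⟨x + v, ⟨h1, x - v, h2, ?_⟩, add_sub_cancel_left x v⟩
    simp only [two_smul]; abel

lemma transfer (hK : IsConvexBody K) {x y : Euc d} {s : ℝ} (hs0 : 0 < s) (hs1 : s < 1)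
    (hy : y ∈ interior K) (hg : gauge ((fun k => k - y) '' K) (x - y) ≤ 1 - s)
    {v : Euc d} (hv1 : y + v ∈ K) (hv2 : y - v ∈ K) :
    x + s • v ∈ K ∧ x - s • v ∈ K := by
  have h1s : (0:ℝ) < 1 - s := by linarith
  set w : Euc d := x - y with hw
  set u : Euc d := (1 - s)⁻¹ • w with hu
  have hwu : (1 - s) • u = w := by
    rw [hu, smul_smul, mul_inv_cancel₀ h1s.ne', one_smul]
  have hgu : gauge ((fun k => k - y) '' K) u ≤ 1 := by
    rw [hu, gauge_smul_of_nonneg (inv_nonneg.2 h1s.le)]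
    calc (1 - s)⁻¹ • gauge ((fun k => k - y) '' K) w
        = (1 - s)⁻¹ * gauge ((fun k => k - y) '' K) w := rfl
      _ ≤ (1 - s)⁻¹ * (1 - s) := by
          exact mul_le_mul_of_nonneg_left hg (inv_nonneg.2 h1s.le)
      _ = 1 := inv_mul_cancel₀ h1s.ne'
  have hp : y + u ∈ K := mem_of_gauge_le_one hK hy hgu
  have key : ∀ z : Euc d, y + z ∈ K → (1 - s) • (y + u) + s • (y + z) = x + s • z := by
    intro z _
    have : x = y + (1 - s) • u := by rw [hwu, hw]; abel
    rw [this]; module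
  constructor
  · have := hK.2.1 hp hv1 h1s.le hs0.le (by ring)
    rwa [key v hv1] at this
  · have hv2' : y + (-v) ∈ K := by rwa [← sub_eq_add_neg]
    have := hK.2.1 hp hv2' h1s.le hs0.le (by ring)
    rw [key (-v) hv2'] at this
    rwa [smul_neg, ← sub_eq_add_neg] at this

end Helpers

/-- Local comparability of Hilbert Finsler balls and Macbeath regions. -/
theorem local_finsler_macbeath :
    ∃ c₀ : ℝ, 1 < c₀ ∧ ∀ d : ℕ, 2 ≤ d →
      ∀ K : Set (Euc d), IsConvexBody K →
        ∀ x ∈ interior K, ∀ y ∈ interior K, hilbertDist K x y ≤ 8 →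
          c₀⁻¹ • macbeathA K x ⊆ finslerBall K y ∧
          finslerBall K y ⊆ c₀ • macbeathA K x := by
  set s : ℝ := Real.exp (-16) with hsdef
  have hs0 : 0 < s := Real.exp_pos _
  have hs1 : s < 1 := by
    rw [hsdef]; exact Real.exp_lt_one_iff.2 (by norm_num)
  refine ⟨2 * Real.exp 16, ?_, ?_⟩
  · nlinarith [Real.add_one_le_exp (16:ℝ)]
  intro d _ K hK x hx y hy hdist
  have hcinv : (2 * Real.exp 16)⁻¹ = s / 2 := by
    rw [hsdef, Real.exp_neg]
    field_simp
  -- gauge bounds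
  set a := gauge ((fun k => k - x) '' K) (y - x) with hadef
  set b := gauge ((fun k => k - y) '' K) (x - y) with hbdef
  have ha1 : a < 1 := gauge_lt_one_of_interior hK.2.1 hx hy
  have hb1 : b < 1 := gauge_lt_one_of_interior hK.2.1 hy hx
  have ha0 : 0 ≤ a := gauge_nonneg _
  have hb0 : 0 ≤ b := gauge_nonneg _
  have hP : (0:ℝ) < (1 - a) * (1 - b) := by nlinarith
  have hlog : -16 ≤ Real.log ((1 - a) * (1 - b)) := by
    unfold hilbertDist at hdist
    rw [← hadef, ← hbdef] at hdist
    linarith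
  have hPs : s ≤ (1 - a) * (1 - b) := by
    calc s = Real.exp (-16) := rfl
      _ ≤ Real.exp (Real.log ((1 - a) * (1 - b))) := Real.exp_le_exp.2 hlog
      _ = (1 - a) * (1 - b) := Real.exp_log hP
  have ha : a ≤ 1 - s := by nlinarith
  have hb : b ≤ 1 - s := by nlinarith
  constructor
  · -- c₀⁻¹ • A(x) ⊆ B_y
    rintro v ⟨u, hu, rfl⟩
    obtain ⟨hu1, hu2⟩ := mem_macbeathA.1 hu
    obtain ⟨h1, h2⟩ := transfer hK hs0 hs1 hx ha hu1 hu2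
    have g1 : gauge ((fun k => k - y) '' K) (s • u) ≤ 1 :=
      gauge_le_one_of_mem (mem_sub_image.2 h1)
    have g2 : gauge ((fun k => k - y) '' K) (-(s • u)) ≤ 1 :=
      gauge_le_one_of_mem (mem_sub_image.2 (by rwa [← sub_eq_add_neg]))
    have heq : (2 * Real.exp 16)⁻¹ • u = (1/2 : ℝ) • (s • u) := by
      rw [smul_smul, hcinv]; ring_nf
    show gauge ((fun k => k - y) '' K) ((2 * Real.exp 16)⁻¹ • u) +
      gauge ((fun k => k - y) '' K) (-((2 * Real.exp 16)⁻¹ • u)) ≤ 2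
    rw [heq, ← smul_neg, gauge_smul_of_nonneg (by norm_num : (0:ℝ) ≤ 1/2),
      gauge_smul_of_nonneg (by norm_num : (0:ℝ) ≤ 1/2), smul_eq_mul, smul_eq_mul]
    linarith
  · -- B_y ⊆ c₀ • A(x)
    intro v hv
    have hv' : gauge ((fun k => k - y) '' K) v + gauge ((fun k => k - y) '' K) (-v) ≤ 2 := hv
    have g1 : gauge ((fun k => k - y) '' K) ((1/2 : ℝ) • v) ≤ 1 := by
      rw [gauge_smul_of_nonneg (by norm_num : (0:ℝ) ≤ 1/2), smul_eq_mul]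
      have := gauge_nonneg (s := (fun k => k - y) '' K) (-v)
      linarith
    have g2 : gauge ((fun k => k - y) '' K) (-((1/2 : ℝ) • v)) ≤ 1 := by
      rw [← smul_neg, gauge_smul_of_nonneg (by norm_num : (0:ℝ) ≤ 1/2), smul_eq_mul]
      have := gauge_nonneg (s := (fun k => k - y) '' K) v
      linarith
    have h1 : y + (1/2 : ℝ) • v ∈ K := mem_of_gauge_le_one hK hy g1
    have h2 : y - (1/2 : ℝ) • v ∈ K := by
      have := mem_of_gauge_le_one hK hy g2
      rwa [← sub_eq_add_neg] at this
    obtain ⟨h3, h4⟩ := transfer hK hs0 hs1 hy hb h1 h2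
    refine ⟨s • ((1/2 : ℝ) • v), mem_macbeathA.2 ⟨h3, h4⟩, ?_⟩
    show (2 * Real.exp 16) • (s • ((1/2 : ℝ) • v)) = v
    rw [smul_smul, smul_smul]
    have : 2 * Real.exp 16 * s * (1/2) = 1 := by
      rw [hsdef, Real.exp_neg]
      have he := Real.exp_ne_zero (16:ℝ)
      field_simp
    rw [this, one_smul]
end
end

section
/- Let C be a convex body and D a centrally symmetric convex body in ℝ^d, let α > 0, and let C₊ := C + α·D (Minkowski sum). Then for every z in the frontier ∂C₊ and every r with 0 < r ≤ α, one has λ_d(C₊ ∩ (z + r·D)) ≥ 2^{−d} · λ_d(z + r·D) = 2^{−d} · r^d · λ_d(D), where λ_d is Lebesgue measure on ℝ^d. -/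
open Set MeasureTheory Metric
open scoped Pointwise RealInnerProductSpace ENNReal

noncomputable section

/-- Relative fatness of Minkowski expansions. -/
theorem mink_expansion_fat {d : ℕ} (C D : Set (Euc d))
    (hC : IsConvexBody C) (hD : IsConvexBody D) (hDs : D = -D)
    (α : ℝ) (hα : 0 < α) (z : Euc d) (hz : z ∈ frontier (C + α • D))
    (r : ℝ) (hr : 0 < r) (hrα : r ≤ α) :
    (2 : ℝ≥0∞)⁻¹ ^ d * volume (z +ᵥ r • D) ≤ volume ((C + α • D) ∩ (z +ᵥ r • D)) ∧
    volume (z +ᵥ r • D) = ENNReal.ofReal (r ^ d) * volume D := by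
  obtain ⟨hCc, hCv, -⟩ := hC
  obtain ⟨hDc, hDv, -⟩ := hD
  -- volume of the translated dilate
  have hvolD : volume (z +ᵥ r • D) = ENNReal.ofReal (r ^ d) * volume D := by
    rw [measure_vadd, Measure.addHaar_smul]
    simp [abs_of_nonneg (pow_nonneg hr.le d)]
  refine ⟨?_, hvolD⟩
  -- z belongs to C + α • D since that set is closed
  have hsum : IsCompact (C + α • D) := hCc.add (hDc.smul α)
  have hzmem : z ∈ C + α • D := by
    have := frontier_subset_closure hz
    rwa [hsum.isClosed.closure_eq] at this
  rw [Set.mem_add] at hzmem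
  obtain ⟨c, hc, y, hy, hczy⟩ := hzmem
  rw [Set.mem_smul_set] at hy
  obtain ⟨v, hv, rfl⟩ := hy
  have hvneg : -v ∈ D := by rw [hDs]; exact Set.neg_mem_neg.2 hv
  -- the witness set: a translate of (r/2) • D inside the intersection
  have hTsub : (z - (r / 2) • v) +ᵥ (r / 2) • D ⊆ (C + α • D) ∩ (z +ᵥ r • D) := by
    intro t ht
    rw [Set.mem_vadd_set] at ht
    obtain ⟨y, hy, rfl⟩ := ht
    rw [Set.mem_smul_set] at hy
    obtain ⟨w, hw, rfl⟩ := hy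
    constructor
    · -- in C + α • D
      rw [Set.mem_add]
      refine ⟨c, hc, α • ((1 - r / (2 * α)) • v + (r / (2 * α)) • w), ?_, ?_⟩
      · rw [Set.mem_smul_set]
        refine ⟨(1 - r / (2 * α)) • v + (r / (2 * α)) • w, ?_, rfl⟩
        refine hDv hv hw ?_ ?_ (by ring)
        · have : r / (2 * α) ≤ 1 := by
            rw [div_le_one (by positivity)]
            linarith
          linarith
        · positivity
      · rw [← hczy]
        have hα' : α ≠ 0 := hα.ne'
        simp only [vadd_eq_add, smul_add, smul_smul]
        have e1 : α * (1 - r / (2 * α)) = α - r / 2 := by field_simp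
        have e2 : α * (r / (2 * α)) = r / 2 := by field_simp
        rw [e1, e2, sub_smul]
        abel
    · -- in z + r • D
      rw [Set.mem_vadd_set]
      refine ⟨r • ((1/2 : ℝ) • w + (1/2 : ℝ) • (-v)), ?_, ?_⟩
      · exact Set.smul_mem_smul_set (hDv hw hvneg (by norm_num) (by norm_num) (by norm_num))
      · simp only [vadd_eq_add, smul_add, smul_smul, smul_neg, mul_one_div]
        abel
  calc (2 : ℝ≥0∞)⁻¹ ^ d * volume (z +ᵥ r • D)
      = volume ((z - (r / 2) • v) +ᵥ (r / 2) • D) := by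
        rw [hvolD, measure_vadd, Measure.addHaar_smul]
        rw [finrank_euclideanSpace, Fintype.card_fin]
        rw [abs_of_nonneg (by positivity : (0:ℝ) ≤ (r/2) ^ d)]
        have h2 : ENNReal.ofReal ((r/2)^d) = (2:ℝ≥0∞)⁻¹ ^ d * ENNReal.ofReal (r^d) := by
          rw [div_pow, ENNReal.ofReal_div_of_pos (by positivity),
            ENNReal.ofReal_pow (by norm_num : (0:ℝ) ≤ 2), ENNReal.ofReal_ofNat,
            ENNReal.div_eq_inv_mul, ← ENNReal.inv_pow]
        rw [h2, mul_assoc]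
    _ ≤ volume ((C + α • D) ∩ (z +ᵥ r • D)) := measure_mono hTsub
end
end

section
/- Let K be a convex body in ℝ^d (d ≥ 2), let x ∈ int(K), and let h be an affine hyperplane through x. Then there exist points a, b ∈ ∂K with x lying in the open segment between a and b, and supporting hyperplanes h_a of K at a and h_b of K at b, such that either (1) h_a and h_b are not parallel and their intersection h_a ∩ h_b (an affine (d−2)-dimensional flat) is contained in h, or (2) h_a, h_b, and h are mutually parallel hyperplanes. (That is, the chord through x determined by a and b is complementary to h: the supporting hyperplanes at its endpoints meet in a (d−2)-flat contained in h, possibly at infinity.) -/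
open Set MeasureTheory Metric
open scoped Pointwise RealInnerProductSpace ENNReal

noncomputable section

private lemma lim_aux {c A B : ℝ} (h : ∀ t : ℝ, 0 < t → t ≤ 1 → A + t * (B - A) < c) :
    A ≤ c := by
  by_contra hc
  push_neg at hc
  have h1 := h 1 one_pos le_rfl
  have hAB : 0 < A - B := by linarith
  set t := (A - c) / (2 * (A - B)) with ht
  have ht0 : 0 < t := div_pos (by linarith) (by linarith)
  have ht1 : t ≤ 1 := by rw [div_le_one (by linarith)]; linarith
  have h2 := h t ht0 ht1
  have h3 : t * (A - B) = (A - c) / 2 := by rw [ht]; field_simp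
  nlinarith

private lemma polar_convex {d : ℕ} (K : Set (Euc d)) : Convex ℝ (polarSet K) := by
  intro y hy z hz s t hs ht hst w hw
  have h1 := hy w hw
  have h2 := hz w hw
  rw [inner_add_right, real_inner_smul_right, real_inner_smul_right]
  nlinarith

private lemma polar_closed {d : ℕ} (K : Set (Euc d)) : IsClosed (polarSet K) := by
  have h : polarSet K = ⋂ x ∈ K, {y : Euc d | ⟪x, y⟫ ≤ 1} := by
    ext y; simp [polarSet]
  rw [h]
  exact isClosed_biInter fun x _ =>
    isClosed_le (Continuous.inner continuous_const continuous_id) continuous_const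

private lemma mem_of_forall_polar {d : ℕ} {K : Set (Euc d)} (hKv : Convex ℝ K)
    (hKcl : IsClosed K) (h0 : (0 : Euc d) ∈ K) {p : Euc d}
    (hp : ∀ z ∈ polarSet K, ⟪z, p⟫ ≤ 1) : p ∈ K := by
  by_contra hpK
  obtain ⟨f, c, hfK, hfp⟩ := geometric_hahn_banach_closed_point hKv hKcl hpK
  have hc0 : 0 < c := by have := hfK 0 h0; simpa using this
  set w := (InnerProductSpace.toDual ℝ (Euc d)).symm f with hwdef
  have hw : ∀ y, ⟪w, y⟫ = f y := fun y => InnerProductSpace.toDual_symm_apply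
  have hz : c⁻¹ • w ∈ polarSet K := by
    intro x hx
    rw [real_inner_smul_right, real_inner_comm, hw]
    have := (hfK x hx).le
    rw [inv_mul_le_iff₀ hc0]
    linarith
  have := hp _ hz
  rw [real_inner_smul_left, hw] at this
  rw [inv_mul_le_iff₀ hc0] at this
  linarith

set_option maxHeartbeats 1000000 in
private theorem key {d : ℕ} {K : Set (Euc d)} (hKc : IsCompact K) (hKv : Convex ℝ K)
    (h0 : (0 : Euc d) ∈ interior K) (n : Euc d) (hn : n ≠ 0) :
    ∃ a ∈ frontier K, ∃ b ∈ frontier K, (0 : Euc d) ∈ openSegment ℝ a b ∧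
      ∃ u v : Euc d, u ≠ 0 ∧ v ≠ 0 ∧
        (∀ y ∈ K, ⟪u, y⟫ ≤ ⟪u, a⟫) ∧ (∀ y ∈ K, ⟪v, y⟫ ≤ ⟪v, b⟫) ∧
        ((¬ (∃ t : ℝ, v = t • u) ∧
            ∀ y : Euc d, ⟪u, y⟫ = ⟪u, a⟫ → ⟪v, y⟫ = ⟪v, b⟫ → ⟪n, y⟫ = 0) ∨
          (∃ s t : ℝ, u = s • n ∧ v = t • n)) := by
  classical
  have hnn : 0 < ‖n‖ := norm_pos_iff.2 hn
  set P := polarSet K with hPdef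
  have hPv : Convex ℝ P := polar_convex K
  have hPcl : IsClosed P := polar_closed K
  have h0K : (0 : Euc d) ∈ K := interior_subset h0
  -- a ball inside K
  obtain ⟨ε, hε, hball⟩ : ∃ ε > 0, ball (0 : Euc d) ε ⊆ K := by
    obtain ⟨ε, hε, h⟩ := Metric.mem_nhds_iff.1 (mem_interior_iff_mem_nhds.1 h0)
    exact ⟨ε, hε, h⟩
  -- P is bounded
  have hPsub : P ⊆ closedBall (0 : Euc d) (2 / ε) := by
    intro z hz
    rw [mem_closedBall, dist_zero_right]
    rcases eq_or_ne z 0 with rfl | hz0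
    · simp; positivity
    · have hznorm : 0 < ‖z‖ := norm_pos_iff.2 hz0
      have hy : (ε / (2 * ‖z‖)) • z ∈ ball (0 : Euc d) ε := by
        rw [mem_ball, dist_zero_right, norm_smul, Real.norm_eq_abs,
          abs_of_pos (by positivity)]
        rw [div_mul_eq_mul_div, mul_comm]
        rw [div_lt_iff₀ (by positivity)]
        nlinarith
      have h1 := hz _ (hball hy)
      rw [real_inner_smul_left, real_inner_self_eq_norm_mul_norm] at h1
      rw [le_div_iff₀ hε]
      have : ε / (2 * ‖z‖) * (‖z‖ * ‖z‖) = ‖z‖ * ε / 2 := by field_simp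
      rw [this] at h1
      linarith
  have hPb : IsCompact P :=
    isCompact_of_isClosed_isBounded hPcl (isBounded_closedBall.subset hPsub)
  -- 0 in interior of P
  obtain ⟨R₀, hR₀⟩ := hKc.isBounded.subset_closedBall 0
  set R := max R₀ 1 with hRdef
  have hR1 : 0 < R := lt_of_lt_of_le one_pos (le_max_right _ _)
  have hKR : K ⊆ closedBall 0 R := hR₀.trans (closedBall_subset_closedBall (le_max_left _ _))
  set r := R⁻¹ with hrdef
  have hr0 : 0 < r := inv_pos.2 hR1
  have hrP : ball (0 : Euc d) r ⊆ P := by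
    intro z hz x hx
    have h1 : ‖x‖ ≤ R := by
      have := hKR hx; rwa [mem_closedBall, dist_zero_right] at this
    have h2 : ‖z‖ ≤ r := by
      have := hz; rw [mem_ball, dist_zero_right] at this; exact this.le
    calc ⟪x, z⟫ ≤ ‖x‖ * ‖z‖ := real_inner_le_norm x z
    _ ≤ R * r := by
        apply mul_le_mul h1 h2 (norm_nonneg _) hR1.le
    _ = 1 := by rw [hrdef]; field_simp
  have h0P : (0 : Euc d) ∈ interior P :=
    interior_maximal hrP isOpen_ball (by simpa using hr0)
  -- the chord-length maximization
  set T : Set (Euc d × ℝ) :=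
    {p | p.1 ∈ P ∧ p.1 + p.2 • n ∈ P ∧ 0 ≤ p.2} with hTdef
  have hTcl : IsClosed T := by
    apply IsClosed.inter (hPcl.preimage continuous_fst)
    apply IsClosed.inter
    · exact hPcl.preimage (continuous_fst.add (continuous_snd.smul continuous_const))
    · exact isClosed_le continuous_const continuous_snd
  have hTsub : T ⊆ closedBall (0 : Euc d) (2 / ε) ×ˢ Icc 0 ((4 / ε) / ‖n‖) := by
    rintro ⟨z, t⟩ ⟨h1, h2, h3⟩
    refine ⟨hPsub h1, h3, ?_⟩
    have e1 : ‖z‖ ≤ 2 / ε := by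
      have := hPsub h1; rwa [mem_closedBall, dist_zero_right] at this
    have e2 : ‖z + t • n‖ ≤ 2 / ε := by
      have := hPsub h2; rwa [mem_closedBall, dist_zero_right] at this
    have e3 : ‖t • n‖ ≤ 4 / ε := by
      have : t • n = (z + t • n) - z := by abel
      rw [this]
      calc ‖(z + t • n) - z‖ ≤ ‖z + t • n‖ + ‖z‖ := norm_sub_le _ _
      _ ≤ 2 / ε + 2 / ε := by linarith
      _ = 4 / ε := by ring
    rw [norm_smul, Real.norm_eq_abs, abs_of_nonneg h3] at e3
    rw [le_div_iff₀ hnn]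
    exact e3
  have hTcomp : IsCompact T :=
    ((isCompact_closedBall _ _).prod isCompact_Icc).of_isClosed_subset hTcl hTsub
  have h0P' : (0 : Euc d) ∈ P := interior_subset h0P
  have hTne : T.Nonempty := ⟨(0, 0), h0P', by simpa using h0P', le_rfl⟩
  obtain ⟨⟨q, lam⟩, hqT, hmax⟩ := hTcomp.exists_isMaxOn hTne continuous_snd.continuousOn
  have hmax' : ∀ p ∈ T, p.2 ≤ lam := fun p hp => hmax hp
  obtain ⟨hq1, hq2, hq3⟩ := hqT
  simp only at hq1 hq2 hq3
  -- lam is positive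
  have hlam : 0 < lam := by
    have hmem : ((-(r / (2 * ‖n‖))) • n, r / ‖n‖) ∈ T := by
      have hb1 : ((-(r / (2 * ‖n‖))) • n) ∈ ball (0 : Euc d) r := by
        rw [mem_ball, dist_zero_right, norm_smul, Real.norm_eq_abs, abs_neg,
          abs_of_pos (by positivity)]
        rw [div_mul_eq_mul_div, mul_comm]
        rw [div_lt_iff₀ (by positivity)]
        nlinarith
      have hb2 : ((-(r / (2 * ‖n‖))) • n + (r / ‖n‖) • n) ∈ ball (0 : Euc d) r := by
        rw [← add_smul]
        have : -(r / (2 * ‖n‖)) + r / ‖n‖ = r / (2 * ‖n‖) := by field_simp; ring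
        rw [this, mem_ball, dist_zero_right, norm_smul, Real.norm_eq_abs,
          abs_of_pos (by positivity)]
        rw [div_mul_eq_mul_div, mul_comm]
        rw [div_lt_iff₀ (by positivity)]
        nlinarith
      exact ⟨hrP hb1, hrP hb2, by positivity⟩
    have := hmax' _ hmem
    simp only at this
    calc (0:ℝ) < r / ‖n‖ := by positivity
    _ ≤ lam := this
  -- the translated body and separation
  set B : Set (Euc d) := (fun z => lam • n + z) '' P with hBdef
  have hBv : Convex ℝ B := hPv.translate _
  have hdisj : Disjoint (interior P) B := by
    rw [Set.disjoint_left]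
    rintro z hz ⟨w', hw'P, hw'⟩
    obtain ⟨ρ, hρ, hρball⟩ := Metric.mem_nhds_iff.1 (mem_interior_iff_mem_nhds.1 hz)
    have hρP : ball z ρ ⊆ P := hρball
    set δ := ρ / (2 * ‖n‖) with hδdef
    have hδ0 : 0 < δ := by positivity
    have hzδ : z + δ • n ∈ P := by
      apply hρP
      rw [mem_ball, dist_eq_norm]
      have : z + δ • n - z = δ • n := by abel
      rw [this, norm_smul, Real.norm_eq_abs, abs_of_pos hδ0, hδdef]
      rw [div_mul_eq_mul_div, mul_comm, div_lt_iff₀ (by positivity)]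
      nlinarith
    have hmem : (w', lam + δ) ∈ T := by
      refine ⟨hw'P, ?_, by positivity⟩
      have : w' + (lam + δ) • n = z + δ • n := by
        rw [← hw']; show w' + (lam + δ) • n = (lam • n + w') + δ • n; rw [add_smul]; abel
      rw [this]; exact hzδ
    have := hmax' _ hmem
    simp only at this
    linarith
  obtain ⟨f, c, hflt, hfge⟩ :=
    geometric_hahn_banach_open (hPv.interior) isOpen_interior hBv hdisj
  -- f ≤ c on all of P
  have hfleP : ∀ z ∈ P, f z ≤ c := by
    intro z hz
    apply lim_aux (B := f 0)
    intro t ht0 ht1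
    have hmem := hPv.add_smul_sub_mem_interior hz h0P ⟨ht0, ht1⟩
    have := hflt _ hmem
    rw [map_add, _root_.map_smul] at this
    simp only [smul_eq_mul, map_sub] at this
    linarith [this]
  -- the two support points
  set v' : Euc d := q + lam • n with hv'def
  have hv'P : v' ∈ P := hq2
  have hv'B : v' ∈ B := ⟨q, hq1, by rw [hv'def]; abel⟩
  have hfv' : f v' = c := le_antisymm (hfleP _ hv'P) (hfge _ hv'B)
  have hfq : f q = c - lam * f n := by
    have : f v' = f q + lam * f n := by
      rw [hv'def, map_add, _root_.map_smul]; simp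
    rw [this] at hfv'; linarith
  have hmin : ∀ z ∈ P, f q ≤ f z := by
    intro z hz
    have := hfge (lam • n + z) ⟨z, hz, rfl⟩
    rw [map_add, _root_.map_smul] at this
    simp only [smul_eq_mul] at this
    linarith [hfq]
  -- the functional as a vector
  set w : Euc d := (InnerProductSpace.toDual ℝ (Euc d)).symm f with hwdef
  have hw : ∀ y, ⟪w, y⟫ = f y := fun y => InnerProductSpace.toDual_symm_apply
  have hc0 : 0 < c := by have := hflt 0 h0P; simpa using this
  have hw0 : w ≠ 0 := by
    intro hw0
    have h1 : f v' = 0 := by rw [← hw v', hw0]; simp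
    rw [hfv'] at h1; linarith
  have hwn : 0 < ‖w‖ := norm_pos_iff.2 hw0
  -- the min value is negative
  set β : ℝ := f q with hβdef
  have hβ0 : β < 0 := by
    have hzneg : (-(r / (2 * ‖w‖))) • w ∈ P := by
      apply hrP
      rw [mem_ball, dist_zero_right, norm_smul, Real.norm_eq_abs, abs_neg,
        abs_of_pos (by positivity)]
      rw [div_mul_eq_mul_div, mul_comm, div_lt_iff₀ (by positivity)]
      nlinarith
    have h1 := hmin _ hzneg
    rw [← hw ((-(r / (2 * ‖w‖))) • w), real_inner_smul_right,
      real_inner_self_eq_norm_mul_norm] at h1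
    have h2 : -(r / (2 * ‖w‖)) * (‖w‖ * ‖w‖) = -(r * ‖w‖ / 2) := by field_simp
    rw [h2] at h1
    have : 0 < r * ‖w‖ / 2 := by positivity
    rw [hβdef]; linarith
  -- the chord endpoints
  set a : Euc d := c⁻¹ • w with hadef
  set b : Euc d := β⁻¹ • w with hbdef
  have hua : ⟪v', a⟫ = 1 := by
    rw [hadef, real_inner_smul_right, real_inner_comm, hw, hfv', inv_mul_cancel₀ hc0.ne']
  have hvb : ⟪q, b⟫ = 1 := by
    rw [hbdef, real_inner_smul_right, real_inner_comm, hw, ← hβdef,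
      inv_mul_cancel₀ hβ0.ne]
  have haK : a ∈ K := by
    apply mem_of_forall_polar hKv hKc.isClosed h0K
    intro z hz
    rw [hadef, real_inner_smul_right, real_inner_comm, hw]
    rw [inv_mul_le_iff₀ hc0]
    simpa using hfleP z hz
  have hbK : b ∈ K := by
    apply mem_of_forall_polar hKv hKc.isClosed h0K
    intro z hz
    rw [hbdef, real_inner_smul_right, real_inner_comm, hw]
    have h1 : β ≤ f z := hmin z hz
    have h2 : β⁻¹ * f z ≤ β⁻¹ * β := mul_le_mul_of_nonpos_left h1 (by
      exact (inv_nonpos.2 hβ0.le))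
    rw [inv_mul_cancel₀ hβ0.ne] at h2
    exact h2
  have hu0 : v' ≠ 0 := by
    intro h
    rw [h] at hfv'; simp at hfv'; linarith
  have hv0 : q ≠ 0 := by
    intro h
    rw [hβdef, h] at hβ0; simp at hβ0
  -- support inequalities
  have hsupa : ∀ y ∈ K, ⟪v', y⟫ ≤ ⟪v', a⟫ := by
    intro y hy
    rw [hua, real_inner_comm]
    exact hv'P y hy
  have hsupb : ∀ y ∈ K, ⟪q, y⟫ ≤ ⟪q, b⟫ := by
    intro y hy
    rw [hvb, real_inner_comm]
    exact hq1 y hy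
  -- frontier membership
  have hafr : a ∈ frontier K := by
    rw [hKc.isClosed.frontier_eq]
    refine ⟨haK, fun hint => ?_⟩
    obtain ⟨ρ, hρ, hρball⟩ := Metric.mem_nhds_iff.1 (mem_interior_iff_mem_nhds.1 hint)
    have hρK : ball a ρ ⊆ K := hρball
    have hun : 0 < ‖v'‖ := norm_pos_iff.2 hu0
    have hy : a + (ρ / (2 * ‖v'‖)) • v' ∈ K := by
      apply hρK
      rw [mem_ball, dist_eq_norm]
      have : a + (ρ / (2 * ‖v'‖)) • v' - a = (ρ / (2 * ‖v'‖)) • v' := by abel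
      rw [this, norm_smul, Real.norm_eq_abs, abs_of_pos (by positivity)]
      rw [div_mul_eq_mul_div, mul_comm, div_lt_iff₀ (by positivity)]
      nlinarith
    have := hsupa _ hy
    rw [inner_add_right] at this
    have h2 : ⟪v', (ρ / (2 * ‖v'‖)) • v'⟫ ≤ (0:ℝ) := by linarith
    rw [real_inner_smul_right, real_inner_self_eq_norm_mul_norm] at h2
    nlinarith [mul_pos (div_pos hρ (by positivity) : (0:ℝ) < ρ / (2 * ‖v'‖)) (mul_pos hun hun)]
  have hbfr : b ∈ frontier K := by
    rw [hKc.isClosed.frontier_eq]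
    refine ⟨hbK, fun hint => ?_⟩
    obtain ⟨ρ, hρ, hρball⟩ := Metric.mem_nhds_iff.1 (mem_interior_iff_mem_nhds.1 hint)
    have hρK : ball b ρ ⊆ K := hρball
    have hun : 0 < ‖q‖ := norm_pos_iff.2 hv0
    have hy : b + (ρ / (2 * ‖q‖)) • q ∈ K := by
      apply hρK
      rw [mem_ball, dist_eq_norm]
      have : b + (ρ / (2 * ‖q‖)) • q - b = (ρ / (2 * ‖q‖)) • q := by abel
      rw [this, norm_smul, Real.norm_eq_abs, abs_of_pos (by positivity)]
      rw [div_mul_eq_mul_div, mul_comm, div_lt_iff₀ (by positivity)]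
      nlinarith
    have := hsupb _ hy
    rw [inner_add_right] at this
    have h2 : ⟪q, (ρ / (2 * ‖q‖)) • q⟫ ≤ (0:ℝ) := by linarith
    rw [real_inner_smul_right, real_inner_self_eq_norm_mul_norm] at h2
    nlinarith [mul_pos (div_pos hρ (by positivity) : (0:ℝ) < ρ / (2 * ‖q‖)) (mul_pos hun hun)]
  -- 0 on the open segment
  have hseg : (0 : Euc d) ∈ openSegment ℝ a b := by
    refine ⟨c / (c - β), -β / (c - β), div_pos hc0 (by linarith), ?_, ?_, ?_⟩
    · apply div_pos (by linarith) (by linarith)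
    · rw [← add_div, div_eq_one_iff_eq (by linarith)]; ring
    · rw [hadef, hbdef, smul_smul, smul_smul, ← add_smul]
      have : c / (c - β) * c⁻¹ + -β / (c - β) * β⁻¹ = 0 := by
        rw [div_mul_eq_mul_div, div_mul_eq_mul_div, mul_inv_cancel₀ hc0.ne', neg_mul,
          mul_inv_cancel₀ hβ0.ne, ← add_div]
        norm_num
      rw [this, zero_smul]
  refine ⟨a, hafr, b, hbfr, hseg, v', q, hu0, hv0, hsupa, hsupb, ?_⟩
  by_cases hpar : ∃ t : ℝ, q = t • v'
  · right
    obtain ⟨t, ht⟩ := hpar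
    have ht1 : t ≠ 1 := by
      intro h
      rw [h, one_smul] at ht
      have hzero : lam • n = 0 := by
        have h3 : q + lam • n = q := by rw [← hv'def, ← ht]
        simpa using congrArg (fun z => z - q) h3
      rcases smul_eq_zero.1 hzero with h | h
      · exact absurd h hlam.ne'
      · exact hn h
    have hv'n : v' = ((1 - t)⁻¹ * lam) • n := by
      have h1 : (1 - t) • v' = lam • n := by
        rw [sub_smul, one_smul, ← ht, hv'def]; abel
      have h2 := congrArg (fun z => (1 - t)⁻¹ • z) h1
      rw [smul_smul, inv_mul_cancel₀ (sub_ne_zero.2 (Ne.symm ht1)), one_smul,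
        smul_smul] at h2
      exact h2
    exact ⟨(1 - t)⁻¹ * lam, t * ((1 - t)⁻¹ * lam), hv'n, by rw [ht, hv'n, smul_smul]⟩
  · left
    refine ⟨hpar, fun y hy1 hy2 => ?_⟩
    rw [hua] at hy1
    rw [hvb] at hy2
    have hnform : n = lam⁻¹ • (v' - q) := by
      rw [hv'def]
      have : q + lam • n - q = lam • n := by abel
      rw [this, smul_smul, inv_mul_cancel₀ hlam.ne', one_smul]
    rw [hnform, real_inner_smul_left, inner_sub_left, hy1, hy2]
    simp

/-- Existence of a complementary chord. -/
theorem complementary_chord_exists {d : ℕ} (hd : 2 ≤ d)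
    (K : Set (Euc d)) (hK : IsConvexBody K)
    (x : Euc d) (hx : x ∈ interior K) (n : Euc d) (hn : n ≠ 0) :
    ∃ a ∈ frontier K, ∃ b ∈ frontier K, x ∈ openSegment ℝ a b ∧
      ∃ u v : Euc d, u ≠ 0 ∧ v ≠ 0 ∧
        (∀ y ∈ K, ⟪u, y⟫ ≤ ⟪u, a⟫) ∧ (∀ y ∈ K, ⟪v, y⟫ ≤ ⟪v, b⟫) ∧
        ((¬ (∃ t : ℝ, v = t • u) ∧
            {y : Euc d | ⟪u, y⟫ = ⟪u, a⟫} ∩ {y : Euc d | ⟪v, y⟫ = ⟪v, b⟫} ⊆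
              {y : Euc d | ⟪n, y⟫ = ⟪n, x⟫}) ∨
          (∃ s t : ℝ, u = s • n ∧ v = t • n)) := by

  obtain ⟨hKc, hKv, hKi⟩ := hK
  set e : Euc d ≃ₜ Euc d := Homeomorph.addLeft (-x) with hedef
  set K' : Set (Euc d) := (fun y => -x + y) '' K with hK'def
  have heK : e '' K = K' := rfl
  have hK'c : IsCompact K' := hKc.image (continuous_const.add continuous_id)
  have hK'v : Convex ℝ K' := hKv.translate (-x)
  have h0' : (0 : Euc d) ∈ interior K' := by
    have h1 : interior K' = e '' interior K := by rw [← heK, e.image_interior]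
    rw [h1]
    exact ⟨x, hx, by simp [hedef]⟩
  obtain ⟨a', ha', b', hb', hseg, u, v, hu0, hv0, hsupa, hsupb, hbranch⟩ :=
    key hK'c hK'v h0' n hn
  have hfr : frontier K' = e '' frontier K := by rw [← heK, e.image_frontier]
  rw [hfr] at ha' hb'
  obtain ⟨a, haf, hea⟩ := ha'
  obtain ⟨b, hbf, heb⟩ := hb'
  have ha'eq : a' = -x + a := by rw [← hea]; simp [hedef]
  have hb'eq : b' = -x + b := by rw [← heb]; simp [hedef]
  have hix : ∀ w y : Euc d, ⟪w, -x + y⟫ = ⟪w, y⟫ - ⟪w, x⟫ := by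
    intro w y
    rw [inner_add_right, inner_neg_right]; ring
  refine ⟨a, haf, b, hbf, ?_, u, v, hu0, hv0, ?_, ?_, ?_⟩
  · obtain ⟨ta, tb, hta, htb, hsum, hcomb⟩ := hseg
    rw [ha'eq, hb'eq] at hcomb
    refine ⟨ta, tb, hta, htb, hsum, ?_⟩
    have h1 : ta • a + tb • b = (ta + tb) • x + (ta • (-x + a) + tb • (-x + b)) := by
      rw [add_smul, smul_add, smul_add, smul_neg, smul_neg]
      abel
    rw [h1, hcomb, hsum, one_smul, add_zero]
  · intro y hy
    have h1 := hsupa (-x + y) ⟨y, hy, rfl⟩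
    rw [ha'eq, hix, hix] at h1
    linarith
  · intro y hy
    have h1 := hsupb (-x + y) ⟨y, hy, rfl⟩
    rw [hb'eq, hix, hix] at h1
    linarith
  · rcases hbranch with ⟨hnp, hcont⟩ | h2
    · left
      refine ⟨hnp, ?_⟩
      rintro y ⟨hy1, hy2⟩
      simp only [mem_setOf_eq] at hy1 hy2 ⊢
      have h1 := hcont (-x + y) (by rw [ha'eq, hix, hix, hy1])
        (by rw [hb'eq, hix, hix, hy2])
      rw [hix] at h1
      linarith
    · exact Or.inr h2
end
end

section
/- Let G and K be convex bodies in ℝ^d with 0 ∈ int(G) and G ⊆ int(K). Then the Funk Holmes–Thompson volumes satisfy the polarity identity ∫_G λ_d((K − x)°) dλ_d(x) = ∫_{K°} λ_d((G° − y)°) dλ_d(y), where λ_d is Lebesgue measure on ℝ^d. (Equivalently, vol_F^K(G) = vol_F^{G°}(K°), where vol_F^K(G) := (1/ω_d)·∫_G λ_d((K − x)°) dλ_d(x) is the Funk Holmes–Thompson volume of G in the Funk geometry of K.) -/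
open Set MeasureTheory Metric
open scoped Pointwise RealInnerProductSpace ENNReal

noncomputable section

section FunkAux
variable {d : ℕ}

lemma inner_lt_one_of_mem_interior {S : Set (Euc d)} {x y : Euc d}
    (hx : x ∈ interior S) (hy : y ∈ polarSet S) : ⟪x, y⟫ < 1 := by
  rcases Metric.mem_nhds_iff.1 (mem_interior_iff_mem_nhds.1 hx) with ⟨ε, hε, hball⟩
  rcases eq_or_ne y 0 with rfl | hy0
  · simp
  · have hny : 0 < ‖y‖ := norm_pos_iff.2 hy0
    have hmem : x + (ε / 2 / ‖y‖) • y ∈ S := by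
      apply hball
      simp only [Metric.mem_ball, dist_self_add_left, norm_smul, Real.norm_eq_abs]
      rw [abs_of_pos (by positivity)]
      rw [div_mul_cancel₀ _ (ne_of_gt hny)]
      linarith
    have := hy _ hmem
    rw [inner_add_left, real_inner_smul_left, real_inner_self_eq_norm_sq] at this
    have h2 : ε / 2 / ‖y‖ * ‖y‖ ^ 2 = ε * ‖y‖ / 2 := by field_simp
    nlinarith

lemma isCompact_polarSet {S : Set (Euc d)} (h0 : (0 : Euc d) ∈ interior S) :
    IsCompact (polarSet S) := by
  rcases Metric.mem_nhds_iff.1 (mem_interior_iff_mem_nhds.1 h0) with ⟨ε, hε, hball⟩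
  apply Metric.isCompact_of_isClosed_isBounded (isClosed_polarSet S)
  apply (Metric.isBounded_closedBall (x := (0 : Euc d)) (r := 2 / ε)).subset
  intro y hy
  rcases eq_or_ne y 0 with rfl | hy0
  · simp; positivity
  · have hny : 0 < ‖y‖ := norm_pos_iff.2 hy0
    have hmem : (ε / 2 / ‖y‖) • y ∈ S := by
      apply hball
      simp only [Metric.mem_ball, dist_zero_right, norm_smul, Real.norm_eq_abs]
      rw [abs_of_pos (by positivity), div_mul_cancel₀ _ (ne_of_gt hny)]
      linarith
    have := hy _ hmem
    rw [real_inner_smul_left, real_inner_self_eq_norm_sq] at this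
    simp only [mem_closedBall, dist_zero_right]
    have h2 : ε / 2 / ‖y‖ * ‖y‖ ^ 2 = ε * ‖y‖ / 2 := by field_simp
    rw [h2] at this
    rw [le_div_iff₀ hε]
    nlinarith

lemma bipolar {G : Set (Euc d)} (hcpt : IsCompact G) (hconv : Convex ℝ G)
    (h0 : (0 : Euc d) ∈ G) : polarSet (polarSet G) = G := by
  apply Subset.antisymm
  · intro z hz
    by_contra hzG
    obtain ⟨f, u, hfu, huz⟩ :=
      geometric_hahn_banach_closed_point hconv hcpt.isClosed hzG
    have hu : 0 < u := by simpa using hfu 0 h0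
    set w : Euc d := (InnerProductSpace.toDual ℝ (Euc d)).symm f with hw
    have hwf : ∀ v : Euc d, ⟪w, v⟫ = f v := by
      intro v
      rw [hw, ← InnerProductSpace.toDual_apply_apply]
      simp
    have hmem : u⁻¹ • w ∈ polarSet G := by
      intro a ha
      rw [real_inner_comm, real_inner_smul_left, hwf]
      rw [inv_mul_le_iff₀ hu, mul_one]
      exact (hfu a ha).le
    have := hz _ hmem
    rw [real_inner_smul_left, hwf, inv_mul_le_iff₀ hu, mul_one] at this
    linarith
  · intro g hg y hy
    rw [real_inner_comm]; exact hy g hg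

lemma det_id_add_rankone (φ : Euc d →L[ℝ] ℝ) (y : Euc d) :
    (ContinuousLinearMap.id ℝ (Euc d) + φ.smulRight y).det = 1 + φ y := by
  have hfin : FiniteDimensional ℝ (Euc d) := by infer_instance
  classical
  set b : Module.Basis (Fin d) ℝ (Euc d) := (EuclideanSpace.basisFun (Fin d) ℝ).toBasis with hb
  have hdet : ∀ L : Euc d →L[ℝ] Euc d,
      L.det = Matrix.det (LinearMap.toMatrix b b (L : Euc d →ₗ[ℝ] Euc d)) := by
    intro L
    rw [ContinuousLinearMap.det, ← LinearMap.det_toMatrix b]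
  rw [hdet]
  have hM : LinearMap.toMatrix b b
      ((ContinuousLinearMap.id ℝ (Euc d) + φ.smulRight y : Euc d →L[ℝ] Euc d) :
        Euc d →ₗ[ℝ] Euc d)
      = 1 + Matrix.replicateCol (Fin 1) (fun i => y i) * Matrix.replicateRow (Fin 1) (fun j => φ (b j)) := by
    ext i j
    rw [LinearMap.toMatrix_apply]
    simp only [ContinuousLinearMap.coe_coe, ContinuousLinearMap.add_apply,
      ContinuousLinearMap.id_apply, ContinuousLinearMap.smulRight_apply]
    rw [map_add, LinearEquiv.map_smul]
    simp only [Matrix.add_apply, Matrix.mul_apply, Matrix.replicateCol_apply, Matrix.replicateRow_apply,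
      Finset.sum_const, Finset.card_univ, Fintype.card_fin, one_smul]
    have h1 : b.repr (b j) i = (1 : Matrix (Fin d) (Fin d) ℝ) i j := by
      rw [b.repr_self]
      by_cases hij : i = j <;> simp [hij, Finsupp.single_apply, Matrix.one_apply, eq_comm]
    have h2 : b.repr y i = y i := rfl
    simp only [Finsupp.coe_add, Finsupp.coe_smul, Pi.add_apply, Pi.smul_apply, smul_eq_mul]
    rw [h1, h2]
    ring
  rw [hM]
  erw [Matrix.det_one_add_replicateCol_mul_replicateRow (ι := Fin 1)]
  congr 1
  have hy : φ y = ∑ j, y j * φ (b j) := by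
    have hsum := b.sum_repr y
    have h2 : ∀ j, b.repr y j = y j := fun j => rfl
    conv_lhs => rw [← hsum]
    rw [map_sum]
    simp [h2]
  rw [hy, dotProduct]
  apply Finset.sum_congr rfl
  intro j _
  ring

/-- The derivative of the projective map `y ↦ (1 - ⟪x,y⟫)⁻¹ • y`. -/
noncomputable def Dmap (x y : Euc d) : Euc d →L[ℝ] Euc d :=
  (1 - ⟪x, y⟫)⁻¹ • ContinuousLinearMap.id ℝ (Euc d) +
    (((1 - ⟪x, y⟫) ^ 2)⁻¹ • innerSL ℝ x).smulRight y

lemma det_Dmap {x y : Euc d} (ht : 1 - ⟪x, y⟫ ≠ 0) :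
    (Dmap x y).det = ((1 - ⟪x, y⟫)⁻¹) ^ (d + 1) := by
  set t := 1 - ⟪x, y⟫ with htdef
  have hD : Dmap x y = t⁻¹ •
      (ContinuousLinearMap.id ℝ (Euc d) + (t⁻¹ • innerSL ℝ x).smulRight y) := by
    refine ContinuousLinearMap.ext fun v => ?_
    simp only [Dmap, ContinuousLinearMap.add_apply, ContinuousLinearMap.smul_apply,
      ContinuousLinearMap.id_apply, ContinuousLinearMap.smulRight_apply, innerSL_apply_apply,
      smul_eq_mul, smul_add, smul_smul]
    congr 2
    rw [sq, mul_inv]; ring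
  have hdim : Module.finrank ℝ (Euc d) = d := by
    simp [finrank_euclideanSpace]
  rw [hD]
  rw [ContinuousLinearMap.det, ContinuousLinearMap.coe_smul, LinearMap.det_smul, hdim]
  have hone : LinearMap.det ((ContinuousLinearMap.id ℝ (Euc d) +
      (t⁻¹ • innerSL ℝ x).smulRight y : Euc d →L[ℝ] Euc d) : Euc d →ₗ[ℝ] Euc d)
      = 1 + (t⁻¹ • innerSL ℝ x) y := det_id_add_rankone _ _
  rw [hone]
  simp only [ContinuousLinearMap.smul_apply, innerSL_apply_apply, smul_eq_mul]
  have hxy : ⟪x, y⟫ = 1 - t := by rw [htdef]; ring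
  rw [hxy]
  have : 1 + t⁻¹ * (1 - t) = t⁻¹ := by field_simp; ring
  rw [this, pow_succ]

lemma hasFDerivAt_pmap {x y : Euc d} (ht : 1 - ⟪x, y⟫ ≠ 0) :
    HasFDerivAt (fun z : Euc d => (1 - ⟪x, z⟫)⁻¹ • z) (Dmap x y) y := by
  have hinner : HasFDerivAt (fun z : Euc d => 1 - ⟪x, z⟫) (-(innerSL ℝ x)) y := by
    simpa using ((innerSL ℝ x).hasFDerivAt (x := y)).const_sub 1
  have hinv : HasFDerivAt (fun z : Euc d => (1 - ⟪x, z⟫)⁻¹)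
      (((1 - ⟪x, y⟫) ^ 2)⁻¹ • innerSL ℝ x) y := by
    have h2 := (hasFDerivAt_inv ht).comp y hinner
    refine h2.congr_fderiv ?_
    refine ContinuousLinearMap.ext fun v => ?_
    simp only [ContinuousLinearMap.smul_apply, innerSL_apply_apply, ContinuousLinearMap.coe_comp',
      Function.comp_apply, ContinuousLinearMap.neg_apply, ContinuousLinearMap.smulRight_apply,
      ContinuousLinearMap.one_apply, smul_eq_mul, ContinuousLinearMap.toSpanSingleton_apply]
    ring
  have h3 := hinv.smul (hasFDerivAt_id y)
  exact h3

lemma polar_shift (S : Set (Euc d)) (x z : Euc d) :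
    z ∈ polarSet ((fun k => k - x) '' S) ↔ ∀ s ∈ S, ⟪s, z⟫ ≤ 1 + ⟪x, z⟫ := by
  constructor
  · intro h s hs
    have := h _ (mem_image_of_mem _ hs)
    rw [inner_sub_left] at this
    linarith
  · rintro h _ ⟨s, hs, rfl⟩
    rw [inner_sub_left]
    linarith [h s hs]

lemma pos_one_add_inner {S : Set (Euc d)} (x : Euc d) (h0 : (0 : Euc d) ∈ interior S) :
    ∀ z ∈ polarSet ((fun k => k - x) '' S), 0 < 1 + ⟪x, z⟫ := by
  rcases Metric.mem_nhds_iff.1 (mem_interior_iff_mem_nhds.1 h0) with ⟨ε, hε, hball⟩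
  intro z hz
  by_contra hcon
  push_neg at hcon
  rcases eq_or_ne x 0 with rfl | hx0
  · rw [inner_zero_left] at hcon; linarith
  · have hnx : 0 < ‖x‖ := norm_pos_iff.2 hx0
    set c : ℝ := ε / 2 / ‖x‖ with hcdef
    have hcpos : 0 < c := by positivity
    have hmem : -(c • x) ∈ S := by
      apply hball
      simp only [Metric.mem_ball, dist_zero_right, norm_neg, norm_smul, Real.norm_eq_abs]
      rw [abs_of_pos hcpos, hcdef, div_mul_cancel₀ _ (ne_of_gt hnx)]
      linarith
    have hle := (polar_shift S x z).1 hz _ hmem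
    rw [inner_neg_left, real_inner_smul_left] at hle
    have hxz : ⟪x, z⟫ ≤ -1 := by linarith
    nlinarith

lemma scalar_inv_ineq {t a q : ℝ} (ht : 0 < t) (hta : t + a = 1) (hq : q ≤ 1) :
    t⁻¹ * q ≤ 1 + t⁻¹ * a := by
  have h1 : t⁻¹ * q ≤ t⁻¹ * 1 := mul_le_mul_of_nonneg_left hq (inv_pos.2 ht).le
  have h2 : t⁻¹ * 1 = 1 + t⁻¹ * a := by field_simp; linarith
  linarith

lemma scalar_inv_eq1 {u a : ℝ} (hu : u ≠ 0) (h : u = 1 + a) : u⁻¹ * a = 1 - u⁻¹ := by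
  field_simp; linarith

lemma scalar_inv_eq2 {t a : ℝ} (ht : t ≠ 0) (h : t + a = 1) : 1 + t⁻¹ * a = t⁻¹ := by
  field_simp; linarith

lemma image_pmap_polar {S : Set (Euc d)} {x : Euc d}
    (hb : ∀ y ∈ polarSet S, ⟪x, y⟫ < 1)
    (hc : ∀ z ∈ polarSet ((fun k => k - x) '' S), 0 < 1 + ⟪x, z⟫) :
    (fun y => (1 - ⟪x, y⟫)⁻¹ • y) '' polarSet S = polarSet ((fun k => k - x) '' S) := by
  apply Subset.antisymm
  · rintro _ ⟨y, hy, rfl⟩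
    have ht : 0 < 1 - ⟪x, y⟫ := by linarith [hb y hy]
    rw [polar_shift]
    intro s hs
    rw [real_inner_smul_right, real_inner_smul_right]
    exact scalar_inv_ineq ht (by ring) (hy s hs)
  · intro z hz
    have hu : 0 < 1 + ⟪x, z⟫ := hc z hz
    set u : ℝ := 1 + ⟪x, z⟫ with hudef
    refine ⟨u⁻¹ • z, ?_, ?_⟩
    · intro s hs
      rw [real_inner_smul_right]
      rw [inv_mul_le_iff₀ hu, mul_one]
      exact (polar_shift S x z).1 hz s hs
    · have hxy : ⟪x, u⁻¹ • z⟫ = 1 - u⁻¹ := by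
        rw [real_inner_smul_right]
        exact scalar_inv_eq1 (ne_of_gt hu) hudef
      show (1 - ⟪x, u⁻¹ • z⟫)⁻¹ • (u⁻¹ • z) = z
      rw [hxy]
      simp only [sub_sub_cancel, inv_inv, smul_smul]
      rw [mul_inv_cancel₀ (ne_of_gt hu), one_smul]

lemma injOn_pmap {S : Set (Euc d)} {x : Euc d}
    (hb : ∀ y ∈ polarSet S, ⟪x, y⟫ < 1) :
    InjOn (fun y => (1 - ⟪x, y⟫)⁻¹ • y) (polarSet S) := by
  have key : ∀ y ∈ polarSet S,
      (1 + ⟪x, (1 - ⟪x, y⟫)⁻¹ • y⟫)⁻¹ • ((1 - ⟪x, y⟫)⁻¹ • y) = y := by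
    intro y hy
    have ht : 0 < 1 - ⟪x, y⟫ := by linarith [hb y hy]
    have h1 : 1 + ⟪x, (1 - ⟪x, y⟫)⁻¹ • y⟫ = (1 - ⟪x, y⟫)⁻¹ := by
      rw [real_inner_smul_right]
      exact scalar_inv_eq2 (ne_of_gt ht) (by ring)
    rw [h1, inv_inv, smul_smul, mul_inv_cancel₀ (ne_of_gt ht), one_smul]
  intro y1 h1 y2 h2 heq
  have heq' : (1 - ⟪x, y1⟫)⁻¹ • y1 = (1 - ⟪x, y2⟫)⁻¹ • y2 := heq
  have t1 := key y1 h1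
  rw [heq'] at t1
  rw [key y2 h2] at t1
  exact t1.symm

lemma volume_polar_translate (S : Set (Euc d)) (x : Euc d)
    (hb : ∀ y ∈ polarSet S, ⟪x, y⟫ < 1)
    (hc : ∀ z ∈ polarSet ((fun k => k - x) '' S), 0 < 1 + ⟪x, z⟫) :
    (volume (polarSet ((fun k => k - x) '' S))).toReal
      = ∫ y in polarSet S, ((1 - ⟪x, y⟫)⁻¹) ^ (d + 1) := by
  have hms : MeasurableSet (polarSet S) := (isClosed_polarSet S).measurableSet
  have hder : ∀ y ∈ polarSet S,
      HasFDerivWithinAt (fun z : Euc d => (1 - ⟪x, z⟫)⁻¹ • z) (Dmap x y) (polarSet S) y := by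
    intro y hy
    exact (hasFDerivAt_pmap (by linarith [hb y hy] : 1 - ⟪x, y⟫ ≠ 0)).hasFDerivWithinAt
  have hcv := MeasureTheory.integral_image_eq_integral_abs_det_fderiv_smul volume hms hder
    (injOn_pmap hb) (fun _ => (1 : ℝ))
  rw [image_pmap_polar hb hc] at hcv
  rw [setIntegral_const] at hcv
  rw [smul_eq_mul, mul_one] at hcv
  rw [← measureReal_def, hcv]
  apply setIntegral_congr_fun hms
  intro y hy
  have ht : 0 < 1 - ⟪x, y⟫ := by linarith [hb y hy]
  show |(Dmap x y).det| • (1 : ℝ) = ((1 - ⟪x, y⟫)⁻¹) ^ (d + 1)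
  rw [det_Dmap (ne_of_gt ht)]
  rw [smul_eq_mul, mul_one, abs_of_pos (by positivity)]

theorem funk_volume_polarity' {d : ℕ} (G K : Set (Euc d))
    (hG : IsCompact G ∧ Convex ℝ G ∧ (interior G).Nonempty)
    (hK : IsCompact K ∧ Convex ℝ K ∧ (interior K).Nonempty)
    (h0 : (0 : Euc d) ∈ interior G) (hGK : G ⊆ interior K) :
    ∫ x in G, (volume (polarSet ((fun k => k - x) '' K))).toReal =
      ∫ y in polarSet K,
        (volume (polarSet ((fun k => k - y) '' polarSet G))).toReal := by
  obtain ⟨hGc, hGconv, -⟩ := hG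
  have h0K : (0 : Euc d) ∈ interior K := hGK (interior_subset h0)
  have hGG : polarSet (polarSet G) = G := bipolar hGc hGconv (interior_subset h0)
  -- 0 is interior to polarSet G
  obtain ⟨R, hR0, hRsub⟩ := hGc.isBounded.subset_closedBall_lt 0 0
  have h0G' : (0 : Euc d) ∈ interior (polarSet G) := by
    rw [mem_interior]
    refine ⟨ball 0 R⁻¹, ?_, isOpen_ball, mem_ball_self (by positivity)⟩
    intro z hz g hg
    have h1 : ‖g‖ ≤ R := by simpa [mem_closedBall, dist_zero_right] using hRsub hg
    have h2 : ‖z‖ < R⁻¹ := by simpa [mem_ball, dist_zero_right] using hz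
    calc ⟪g, z⟫ ≤ ‖g‖ * ‖z‖ := real_inner_le_norm g z
    _ ≤ R * R⁻¹ := by
        apply mul_le_mul h1 h2.le (norm_nonneg _) hR0.le
    _ = 1 := mul_inv_cancel₀ (ne_of_gt hR0)
  have hKpc : IsCompact (polarSet K) := isCompact_polarSet h0K
  -- rewrite the left-hand side
  have hL : ∫ x in G, (volume (polarSet ((fun k => k - x) '' K))).toReal
      = ∫ x in G, ∫ y in polarSet K, ((1 - ⟪x, y⟫)⁻¹) ^ (d + 1) := by
    apply setIntegral_congr_fun hGc.measurableSet
    intro x hx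
    exact volume_polar_translate K x
      (fun y hy => inner_lt_one_of_mem_interior (hGK hx) hy)
      (pos_one_add_inner x h0K)
  -- rewrite the right-hand side
  have hR : ∫ y in polarSet K, (volume (polarSet ((fun k => k - y) '' polarSet G))).toReal
      = ∫ y in polarSet K, ∫ x in G, ((1 - ⟪x, y⟫)⁻¹) ^ (d + 1) := by
    apply setIntegral_congr_fun (isClosed_polarSet K).measurableSet
    intro y hy
    have hby : ∀ u ∈ polarSet (polarSet G), ⟪y, u⟫ < 1 := by
      intro u hu
      rw [hGG] at hu
      rw [real_inner_comm]
      exact inner_lt_one_of_mem_interior (hGK hu) hy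
    have h1 := volume_polar_translate (polarSet G) y hby (pos_one_add_inner y h0G')
    rw [hGG] at h1
    show (volume (polarSet ((fun k => k - y) '' polarSet G))).toReal
        = ∫ x in G, ((1 - ⟪x, y⟫)⁻¹) ^ (d + 1)
    rw [h1]
    apply setIntegral_congr_fun hGc.measurableSet
    intro x _
    show ((1 - ⟪y, x⟫)⁻¹ : ℝ) ^ (d + 1) = ((1 - ⟪x, y⟫)⁻¹) ^ (d + 1)
    rw [real_inner_comm]
  rw [hL, hR]
  -- Fubini
  have hprod : IsCompact (G ×ˢ polarSet K) := hGc.prod hKpc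
  have hcont : ContinuousOn
      (fun p : Euc d × Euc d => ((1 - ⟪p.1, p.2⟫)⁻¹) ^ (d + 1)) (G ×ˢ polarSet K) := by
    apply ContinuousOn.pow
    apply ContinuousOn.inv₀
    · exact (continuous_const.sub (continuous_inner.comp
        (continuous_fst.prodMk continuous_snd))).continuousOn
    · rintro ⟨x, y⟩ hp
      have := inner_lt_one_of_mem_interior (hGK hp.1) hp.2
      intro hzero
      rw [sub_eq_zero] at hzero
      exact absurd hzero.symm (ne_of_lt this)
  have hint : Integrable (Function.uncurry
        (fun x y : Euc d => ((1 - ⟪x, y⟫)⁻¹) ^ (d + 1)))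
      ((volume.restrict G).prod (volume.restrict (polarSet K))) := by
    rw [Measure.prod_restrict]
    exact hcont.integrableOn_compact hprod
  exact MeasureTheory.integral_integral_swap hint

end FunkAux

/-- Polarity identity for Funk Holmes–Thompson volumes. -/
theorem funk_volume_polarity {d : ℕ} (G K : Set (Euc d))
    (hG : IsConvexBody G) (hK : IsConvexBody K)
    (h0 : (0 : Euc d) ∈ interior G) (hGK : G ⊆ interior K) :
    ∫ x in G, (volume (polarSet ((fun k => k - x) '' K))).toReal =
      ∫ y in polarSet K,
        (volume (polarSet ((fun k => k - y) '' polarSet G))).toReal := by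
  exact funk_volume_polarity' G K hG hK h0 hGK
end
end
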